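/- arXiv:1601.02792 — 3 statements merged into one kernel-verified Lean document; each statement's English description precedes it below -/
import Mathlib

section
/- Let X be a simplicial complex on a vertex set V, and let a_1, a_2 ∈ V be vertices such that whenever {a_1} ∪ G and {a_2} ∪ G are both faces of X (for G ⊆ V \ {a_1,a_2}), then {a_1, a_2} ∪ G is also a face of X. Let V_0 = V \ {a_1, a_2}, let a be a new vertex, and let Y be the simplicial complex on W = V_0 ∪ {a} such that (i) the restrictions X|_{V_0} and Y|_{V_0} coincide, and (ii) for G ⊆ V_0, the set G ∪ {a} is a face of Y if and only if G ∪ {a_1} or G ∪ {a_2} is a face of X. Then X and Y are homotopy equivalent (i.e., their geometric realizations are homotopy equivalent topological spaces). -/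
/-!
Common infrastructure: abstract simplicial complexes, geometric realization,
homotopy equivalence, reduced simplicial cohomology, squarefree monomial ideals
(encoded as upward closed families of finite sets), Koszul-complex multigraded
Betti numbers, and letterplace ideals of posets.
-/

noncomputable section

open Finset

attribute [local instance] Classical.propDecidable

universe u v w

/-- An abstract simplicial complex on the vertex type `V`: a collection of
finite subsets of `V` (the faces) closed under taking subsets. -/
structure SComplex (V : Type u) where
  faces : Set (Finset V)
  down_closed : ∀ {F G : Finset V}, F ∈ faces → G ⊆ F → G ∈ faces

namespace SComplex

/-- The geometric realization of a simplicial complex: the subspace of `V → ℝ`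
consisting of the convex weight functions supported on a face. -/
def realization {V : Type u} [Fintype V] (X : SComplex V) : Set (V → ℝ) :=
  {f | (∀ v, 0 ≤ f v) ∧ (∑ v, f v) = 1 ∧ ∃ F ∈ X.faces, ∀ v, f v ≠ 0 → v ∈ F}

/-- Two simplicial complexes are homotopy equivalent if their geometric
realizations are homotopy equivalent topological spaces. -/
def HEquiv {V : Type u} {W : Type v} [Fintype V] [Fintype W]
    (X : SComplex V) (Y : SComplex W) : Prop :=
  Nonempty (ContinuousMap.HomotopyEquiv X.realization Y.realization)

/-- Isomorphism ("equality up to relabeling of vertices") of simplicial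
complexes: an order isomorphism between the face posets. -/
def IsIsomorphic {V : Type u} {W : Type v} (X : SComplex V) (Y : SComplex W) : Prop :=
  Nonempty ({F : Finset V // F ∈ X.faces} ≃o {G : Finset W // G ∈ Y.faces})

/-- The induced subcomplex on a subset `S` of the vertex set. -/
def restrict {V : Type u} (X : SComplex V) (S : Set V) : SComplex V where
  faces := {F | F ∈ X.faces ∧ ∀ v ∈ F, v ∈ S}
  down_closed := by
    intro F G hF hGF
    exact ⟨X.down_closed hF.1 hGF, fun v hv => hF.2 v (hGF hv)⟩

/-- The join of two simplicial complexes (on the disjoint union of the two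
vertex types). -/
def join {V : Type u} {W : Type v} (X : SComplex V) (Y : SComplex W) :
    SComplex (V ⊕ W) where
  faces := {F | F.preimage Sum.inl Sum.inl_injective.injOn ∈ X.faces ∧
                F.preimage Sum.inr Sum.inr_injective.injOn ∈ Y.faces}
  down_closed := by
    intro F G hF hGF
    constructor
    · exact X.down_closed hF.1 fun x hx => by
        simp only [Finset.mem_preimage] at hx ⊢
        exact hGF hx
    · exact Y.down_closed hF.2 fun x hx => by
        simp only [Finset.mem_preimage] at hx ⊢
        exact hGF hx

/-- The join of a finite family of simplicial complexes on pairwise disjoint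
vertex types. -/
def bigJoin {ι : Type u} {V : ι → Type v} (X : ∀ i, SComplex (V i)) :
    SComplex (Σ i, V i) where
  faces := {F | ∀ i, F.preimage (Sigma.mk i) sigma_mk_injective.injOn ∈ (X i).faces}
  down_closed := by
    intro F G hF hGF i
    exact (X i).down_closed (hF i) fun x hx => by
      simp only [Finset.mem_preimage] at hx ⊢
      exact hGF hx

/-- The simplicial complex consisting of two disjoint points. -/
def twoPoint : SComplex Bool where
  faces := {F | F.card ≤ 1}
  down_closed := by
    intro F G hF hGF
    exact le_trans (Finset.card_le_card hGF) hF

/-- The suspension of a simplicial complex: its join with two points. -/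
def suspension {V : Type u} (X : SComplex V) : SComplex (V ⊕ Bool) :=
  join X twoPoint

/-- Vertex type of the `m`-fold iterated suspension. -/
def SuspType (V : Type u) : ℕ → Type u
  | 0 => V
  | m + 1 => SuspType V m ⊕ Bool

/-- The `m`-fold iterated suspension of a simplicial complex. -/
def iterSusp {V : Type u} (X : SComplex V) : (m : ℕ) → SComplex (SuspType V m)
  | 0 => X
  | m + 1 => suspension (iterSusp X m)

end SComplex

/-- Position of `x` with respect to a finite set: the number of elements of `F`
preceding `x` in a fixed well-ordering of the vertex type.  Used for the signs
in (co)chain complexes. -/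
def vpos {V : Type u} (F : Finset V) (x : V) : ℕ :=
  (F.filter fun w => WellOrderingRel w x).card

namespace SComplex

variable (k : Type w) [Field k]

/-- The faces of dimension `i` (i.e. of cardinality `i + 1`), `i ∈ ℤ`. -/
abbrev Face {V : Type u} (X : SComplex V) (i : ℤ) : Type u :=
  {F : Finset V // F ∈ X.faces ∧ (F.card : ℤ) = i + 1}

/-- Reduced simplicial `i`-cochains of `X` with coefficients in `k`
(the empty face in dimension `-1` is included). -/
abbrev cochain {V : Type u} (X : SComplex V) (i : ℤ) : Type (max u w) :=
  Face X i → k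

/-- Evaluation of a cochain on an arbitrary finite set (zero if the set is not
a face of the appropriate dimension). -/
def evalC {V : Type u} {X : SComplex V} {i : ℤ} (f : cochain k X i) (F : Finset V) : k :=
  if h : F ∈ X.faces ∧ (F.card : ℤ) = i + 1 then f ⟨F, h⟩ else 0

theorem evalC_add {V : Type u} {X : SComplex V} {i : ℤ} (f g : cochain k X i)
    (F : Finset V) : evalC k (f + g) F = evalC k f F + evalC k g F := by
  unfold evalC
  split_ifs <;> simp

theorem evalC_smul {V : Type u} {X : SComplex V} {i : ℤ} (s : k) (f : cochain k X i)
    (F : Finset V) : evalC k (s • f) F = s * evalC k f F := by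
  unfold evalC
  split_ifs <;> simp

/-- The simplicial coboundary map on reduced cochains. -/
def coboundary {V : Type u} (X : SComplex V) (i : ℤ) :
    cochain k X i →ₗ[k] cochain k X (i + 1) where
  toFun f F := ∑ v ∈ F.1, ((-1 : k) ^ vpos F.1 v) * evalC k f (F.1.erase v)
  map_add' f g := by
    funext F
    show (∑ v ∈ F.1, ((-1 : k) ^ vpos F.1 v) * evalC k (f + g) (F.1.erase v))
      = (∑ v ∈ F.1, ((-1 : k) ^ vpos F.1 v) * evalC k f (F.1.erase v))
      + (∑ v ∈ F.1, ((-1 : k) ^ vpos F.1 v) * evalC k g (F.1.erase v))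
    rw [← Finset.sum_add_distrib]
    exact Finset.sum_congr rfl fun v _ => by rw [evalC_add, mul_add]
  map_smul' s f := by
    funext F
    show (∑ v ∈ F.1, ((-1 : k) ^ vpos F.1 v) * evalC k (s • f) (F.1.erase v))
      = s * ∑ v ∈ F.1, ((-1 : k) ^ vpos F.1 v) * evalC k f (F.1.erase v)
    rw [Finset.mul_sum]
    exact Finset.sum_congr rfl fun v _ => by rw [evalC_smul]; ring

/-- The dimension of the `i`-th reduced simplicial cohomology of `X` with
coefficients in the field `k` (computed as `dim ker d^i - dim im d^(i-1)`). -/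
def redCohomDim {V : Type u} (X : SComplex V) (i : ℤ) : ℕ :=
  Module.finrank k (LinearMap.ker (coboundary k X i)) -
    Module.finrank k (LinearMap.range (coboundary k X (i - 1)))

/-- The generating series `t·H̃(X,t) = ∑_{i ≥ -1} t^{i+1} dim_k H̃^i(X;k)`,
an element of `ℕ⟦t⟧`. -/
def hSeries {V : Type u} (X : SComplex V) : PowerSeries ℕ :=
  PowerSeries.mk fun m => redCohomDim k X ((m : ℤ) - 1)

end SComplex

/-- A squarefree monomial ideal on the set of variables `W`, encoded by the
upward closed family of the supports of the squarefree monomials belonging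
to it. -/
structure SqfIdeal (W : Type u) where
  carrier : Set (Finset W)
  up_closed : ∀ {S T : Finset W}, S ∈ carrier → S ⊆ T → T ∈ carrier

namespace SqfIdeal

/-- The basis of the degree-`R` strand of the Koszul complex `K(x;I)` in
homological degree `i`. -/
abbrev KBasis {W : Type u} (I : SqfIdeal W) (R : Finset W) (i : ℤ) : Type u :=
  {S : Finset W // S ⊆ R ∧ (S.card : ℤ) = i ∧ R \ S ∈ I.carrier}

/-- The degree-`R` strand of the Koszul complex of `I`, in homological
degree `i`, with coefficients in `k`. -/
abbrev kchain (k : Type w) [Field k] {W : Type u} (I : SqfIdeal W) (R : Finset W)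
    (i : ℤ) : Type (max u w) :=
  KBasis I R i → k

variable (k : Type w) [Field k]

/-- Evaluation of a Koszul chain on an arbitrary finite set. -/
def evalK {W : Type u} {I : SqfIdeal W} {R : Finset W} {i : ℤ}
    (f : kchain k I R i) (S : Finset W) : k :=
  if h : S ⊆ R ∧ (S.card : ℤ) = i ∧ R \ S ∈ I.carrier then f ⟨S, h⟩ else 0

theorem evalK_add {W : Type u} {I : SqfIdeal W} {R : Finset W} {i : ℤ}
    (f g : kchain k I R i) (S : Finset W) :
    evalK k (f + g) S = evalK k f S + evalK k g S := by
  unfold evalK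
  split_ifs <;> simp

theorem evalK_smul {W : Type u} {I : SqfIdeal W} {R : Finset W} {i : ℤ}
    (s : k) (f : kchain k I R i) (S : Finset W) :
    evalK k (s • f) S = s * evalK k f S := by
  unfold evalK
  split_ifs <;> simp

/-- The Koszul differential on the degree-`R` strand (as a map of the dual
function spaces). -/
def koszulD {W : Type u} (I : SqfIdeal W) (R : Finset W) (i : ℤ) :
    kchain k I R i →ₗ[k] kchain k I R (i - 1) where
  toFun f S := ∑ v ∈ R \ S.1, ((-1 : k) ^ vpos S.1 v) * evalK k f (insert v S.1)
  map_add' f g := by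
    funext S
    show (∑ v ∈ R \ S.1, ((-1 : k) ^ vpos S.1 v) * evalK k (f + g) (insert v S.1))
      = (∑ v ∈ R \ S.1, ((-1 : k) ^ vpos S.1 v) * evalK k f (insert v S.1))
      + (∑ v ∈ R \ S.1, ((-1 : k) ^ vpos S.1 v) * evalK k g (insert v S.1))
    rw [← Finset.sum_add_distrib]
    exact Finset.sum_congr rfl fun v _ => by rw [evalK_add, mul_add]
  map_smul' s f := by
    funext S
    show (∑ v ∈ R \ S.1, ((-1 : k) ^ vpos S.1 v) * evalK k (s • f) (insert v S.1))
      = s * ∑ v ∈ R \ S.1, ((-1 : k) ^ vpos S.1 v) * evalK k f (insert v S.1)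
    rw [Finset.mul_sum]
    exact Finset.sum_congr rfl fun v _ => by rw [evalK_smul]; ring

end SqfIdeal

/-- The multigraded Betti number `β_{i,R}(I) = dim_k Tor_i(I,k)_R` of a
squarefree monomial ideal in the squarefree multidegree `R`, computed as the
dimension of the `i`-th homology of the degree-`R` strand of the Koszul
complex. -/
def multiBetti (k : Type w) [Field k] {W : Type u} (I : SqfIdeal W) (i : ℤ)
    (R : Finset W) : ℕ :=
  Module.finrank k (LinearMap.ker (SqfIdeal.koszulD k I R i)) -
    Module.finrank k (LinearMap.range (SqfIdeal.koszulD k I R (i + 1)))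

/-- The graded Betti number `β_{i,j}(I) = dim_k Tor_i(I,k)_j` of a squarefree
monomial ideal: the sum of the multigraded Betti numbers over the (squarefree)
multidegrees of cardinality `j`. -/
def gradedBetti (k : Type w) [Field k] {W : Type u} [Fintype W] (I : SqfIdeal W)
    (i : ℤ) (j : ℤ) : ℕ :=
  if 0 ≤ j then
    ∑ R ∈ Finset.powersetCard j.toNat (Finset.univ : Finset W), multiBetti k I i R
  else 0

/-- The `n`-th letterplace ideal `L(n,P)` of a poset `P`: the squarefree
monomial ideal on the variables `x_{(i,p)}`, `(i,p) ∈ [n] × P`, generated by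
the monomials `x_{(1,p₁)} ⋯ x_{(n,pₙ)}` with `p₁ ≤ p₂ ≤ ⋯ ≤ pₙ` in `P`. -/
def letterplace (n : ℕ) (P : Type u) [PartialOrder P] : SqfIdeal (Fin n × P) where
  carrier := {T | ∃ c : Fin n → P, Monotone c ∧ ∀ i, (i, c i) ∈ T}
  up_closed := by
    rintro S T ⟨c, hc, hm⟩ hST
    exact ⟨c, hc, fun i => hST (hm i)⟩

/-- The `i`-th part `R_i ⊆ P` of a multidegree `R ⊆ [n] × P`. -/
def part {n : ℕ} {P : Type u} (R : Finset (Fin n × P)) (i : Fin n) : Finset P :=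
  (R.filter fun q => q.1 = i).image Prod.snd

/-- The set of maximal elements of the induced subposet on `A`. -/
def maxSet {P : Type u} [PartialOrder P] (A : Finset P) : Finset P :=
  A.filter fun a => ∀ b ∈ A, a ≤ b → a = b

/-- The set of minimal elements of the induced subposet on `A`. -/
def minSet {P : Type u} [PartialOrder P] (A : Finset P) : Finset P :=
  A.filter fun a => ∀ b ∈ A, b ≤ a → a = b

/-- The transitive order `A ≤ B` on subsets of a poset: every maximal element
of `A` is below some minimal element of `B`, and every minimal element of `B`
is above some maximal element of `A`. -/
def subsetLE {P : Type u} [PartialOrder P] (A B : Finset P) : Prop :=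
  (∀ a ∈ maxSet A, ∃ b ∈ minSet B, a ≤ b) ∧
  (∀ b ∈ minSet B, ∃ a ∈ maxSet A, a ≤ b)

/-- The independence complex of the bipartite graph on two disjoint copies of
`P`, with left vertex set `A`, right vertex set `B`, and edges the pairs
`(p, q) ∈ A × B` with `p ≤ q` in `P`. -/
def XComplex {P : Type u} [PartialOrder P] (A B : Finset P) : SComplex (P ⊕ P) where
  faces := {F | (∀ x ∈ F, Sum.elim (· ∈ A) (· ∈ B) x) ∧
                ∀ p q : P, Sum.inl p ∈ F → Sum.inr q ∈ F → ¬ p ≤ q}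
  down_closed := by
    intro F G hF hGF
    exact ⟨fun x hx => hF.1 x (hGF hx), fun p q hp hq => hF.2 p q (hGF hp) (hGF hq)⟩

/-- `Y₁`: the simplicial complex on `A` whose faces are the subsets `F ⊆ A`
such that some `b ∈ B` dominates no element of `F`. -/
def Y1Complex {P : Type u} [PartialOrder P] (A B : Finset P) : SComplex P where
  faces := {F | (∀ x ∈ F, x ∈ A) ∧ ∃ b ∈ B, ∀ a ∈ F, ¬ a ≤ b}
  down_closed := by
    rintro F G ⟨hFA, b, hb, hFb⟩ hGF
    exact ⟨fun x hx => hFA x (hGF hx), b, hb, fun a ha => hFb a (hGF ha)⟩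

/-- `Y₂`: the simplicial complex on `B` whose faces are the subsets `F ⊆ B`
such that some `a ∈ A` is dominated by no element of `F`. -/
def Y2Complex {P : Type u} [PartialOrder P] (A B : Finset P) : SComplex P where
  faces := {F | (∀ x ∈ F, x ∈ B) ∧ ∃ a ∈ A, ∀ b ∈ F, ¬ a ≤ b}
  down_closed := by
    rintro F G ⟨hFB, a, ha, hFa⟩ hGF
    exact ⟨fun x hx => hFB x (hGF hx), a, ha, fun b hb => hFa b (hGF hb)⟩

/-- The restriction `Δ(n,P)|_R` of the Stanley–Reisner complex of the
letterplace ideal `L(n,P)` to the vertex set `R`. -/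
def deltaRes (n : ℕ) (P : Type u) [PartialOrder P] (R : Finset (Fin n × P)) :
    SComplex (Fin n × P) where
  faces := {F | F ⊆ R ∧ ¬ ∃ c : Fin n → P, Monotone c ∧ ∀ i, (i, c i) ∈ F}
  down_closed := by
    rintro F G ⟨hFR, hF⟩ hGF
    exact ⟨hGF.trans hFR, fun ⟨c, hc, hm⟩ => hF ⟨c, hc, fun i => hGF (hm i)⟩⟩

/-- `A` is a maximal antichain of the poset `P`. -/
def IsMaxAntichain' {P : Type u} [PartialOrder P] (A : Finset P) : Prop :=
  IsAntichain (· ≤ ·) (A : Set P) ∧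
    ∀ B : Finset P, IsAntichain (· ≤ ·) (B : Set P) → A ⊆ B → A = B

/-- The maximal cardinality of an antichain in the finite poset `P`. -/
def maxAntichainCard (P : Type u) [PartialOrder P] [Fintype P] : ℕ :=
  Finset.sup (Finset.univ.filter fun A : Finset P => IsAntichain (· ≤ ·) (A : Set P))
    Finset.card

/-- The independence complex of a bipartite graph, with parts `A` and `B` and
edge relation `E`. -/
def bipIndep {A : Type u} {B : Type v} (E : A → B → Prop) : SComplex (A ⊕ B) where
  faces := {F | ∀ a b, Sum.inl a ∈ F → Sum.inr b ∈ F → ¬ E a b}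
  down_closed := by
    intro F G hF hGF a b ha hb
    exact hF a b (hGF ha) (hGF hb)


set_option linter.unusedSectionVars false
set_option linter.unusedVariables false

namespace Statement0Proof

open SComplex

variable {V : Type u} [Fintype V]

/-- The support of a weight function, as a finset. -/
def suppF (x : V → ℝ) : Finset V := Finset.univ.filter (fun v => x v ≠ 0)

lemma mem_suppF {x : V → ℝ} {v : V} : v ∈ suppF x ↔ x v ≠ 0 := by simp [suppF]

lemma suppF_mem_faces {X : SComplex V} {x : V → ℝ} (hx : x ∈ X.realization) :
    suppF x ∈ X.faces := by
  obtain ⟨-, -, F, hF, hs⟩ := hx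
  exact X.down_closed hF (fun v hv => hs v (mem_suppF.1 hv))

lemma realization_congr {K L : SComplex V} (h : K.faces = L.faces) :
    K.realization = L.realization := by
  unfold SComplex.realization; rw [h]

section Collapse

lemma sandwich {σ F : Finset V} {w : V} (hw : w ∉ σ) (h1 : σ ⊆ F) (h2 : F ⊆ insert w σ) :
    F = σ ∨ F = insert w σ := by
  by_cases hwF : w ∈ F
  · right
    exact subset_antisymm h2 (Finset.insert_subset hwF h1)
  · left
    refine subset_antisymm (fun v hv => ?_) h1
    rcases Finset.mem_insert.1 (h2 hv) with h | h
    · exact absurd (h ▸ hv) hwF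
    · exact h

/-- The complex obtained by removing a free pair `(σ, insert w σ)`. -/
def collapsed (K : SComplex V) (σ : Finset V) (w : V) (hw : w ∉ σ)
    (hfree : ∀ ρ ∈ K.faces, σ ⊆ ρ → ρ ⊆ insert w σ) : SComplex V where
  faces := K.faces \ {σ, insert w σ}
  down_closed := by
    intro F G hF hGF
    refine ⟨K.down_closed hF.1 hGF, ?_⟩
    intro hG
    rcases hG with hG | hG
    · rcases sandwich hw (hG ▸ hGF) (hfree F hF.1 (hG ▸ hGF)) with h | h <;>
        exact hF.2 (by simp [h])
    · simp only [Set.mem_singleton_iff] at hG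
      have hσF : σ ⊆ F := (Finset.subset_insert w σ).trans (hG ▸ hGF)
      rcases sandwich hw hσF (hfree F hF.1 hσF) with h | h <;>
        exact hF.2 (by simp [h])

/-- The minimum of the coordinates over `σ`. -/
def cm (σ : Finset V) (hne : σ.Nonempty) (x : V → ℝ) : ℝ := σ.inf' hne x

/-- The (partial, with parameter `t`) collapse retraction. -/
def cr (σ : Finset V) (hne : σ.Nonempty) (w : V) (t : ℝ) (x : V → ℝ) : V → ℝ := fun v =>
  x v + (if v ∈ σ then -(t * cm σ hne x) else 0) +
    (if v = w then (σ.card : ℝ) * (t * cm σ hne x) else 0)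

lemma cm_cont (σ : Finset V) (hne : σ.Nonempty) :
    Continuous (fun x : V → ℝ => cm σ hne x) :=
  Continuous.finset_inf'_apply hne (fun i _ => continuous_apply i)

lemma cr_cont (σ : Finset V) (hne : σ.Nonempty) (w : V) :
    Continuous (fun p : (V → ℝ) × ℝ => cr σ hne w p.2 p.1) := by
  apply continuous_pi
  intro v
  have hm : Continuous (fun p : (V → ℝ) × ℝ => p.2 * cm σ hne p.1) :=
    continuous_snd.mul ((cm_cont σ hne).comp continuous_fst)
  unfold cr
  apply Continuous.add
  apply Continuous.add
  · exact (continuous_apply v).comp continuous_fst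
  · split_ifs
    · exact hm.neg
    · exact continuous_const
  · split_ifs
    · exact continuous_const.mul hm
    · exact continuous_const

lemma cr_eq_self {σ : Finset V} {hne : σ.Nonempty} {w : V} {x : V → ℝ}
    (hm : cm σ hne x = 0) (t : ℝ) : cr σ hne w t x = x := by
  funext v
  simp [cr, hm]

lemma cr_zero (σ : Finset V) (hne : σ.Nonempty) (w : V) (x : V → ℝ) :
    cr σ hne w 0 x = x := by
  funext v
  simp [cr]

lemma cm_nonneg {σ : Finset V} (hne : σ.Nonempty) {x : V → ℝ} (h0 : ∀ v, 0 ≤ x v) :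
    0 ≤ cm σ hne x :=
  Finset.le_inf' hne x (fun v _ => h0 v)

lemma cm_pos_supp {σ : Finset V} (hne : σ.Nonempty) {x : V → ℝ} (h0 : ∀ v, 0 ≤ x v)
    (hm : cm σ hne x ≠ 0) : σ ⊆ suppF x := by
  intro v hv
  rw [mem_suppF]
  intro h
  have h1 : cm σ hne x ≤ x v := Finset.inf'_le x hv
  have h2 := cm_nonneg hne h0 (x := x)
  rw [h] at h1
  exact hm (le_antisymm h1 h2)

lemma supp_cases {K : SComplex V} {σ : Finset V} (hne : σ.Nonempty) {w : V} (hw : w ∉ σ)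
    (hfree : ∀ ρ ∈ K.faces, σ ⊆ ρ → ρ ⊆ insert w σ)
    {x : V → ℝ} (hx : x ∈ K.realization) (hm : cm σ hne x ≠ 0) :
    suppF x = σ ∨ suppF x = insert w σ :=
  sandwich hw (cm_pos_supp hne hx.1 hm)
    (hfree _ (suppF_mem_faces hx) (cm_pos_supp hne hx.1 hm))

lemma cr_sum (σ : Finset V) (hne : σ.Nonempty) (w : V) (t : ℝ) (x : V → ℝ) :
    (∑ v, cr σ hne w t x v) = ∑ v, x v := by
  unfold cr
  rw [Finset.sum_add_distrib, Finset.sum_add_distrib]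
  have h1 : (∑ v : V, if v ∈ σ then -(t * cm σ hne x) else 0)
      = -((σ.card : ℝ) * (t * cm σ hne x)) := by
    rw [Finset.sum_ite_mem, Finset.univ_inter, Finset.sum_const, nsmul_eq_mul]
    ring
  have h2 : (∑ v : V, if v = w then (σ.card : ℝ) * (t * cm σ hne x) else 0)
      = (σ.card : ℝ) * (t * cm σ hne x) := by
    rw [Finset.sum_ite_eq' Finset.univ w]
    simp
  rw [h1, h2]
  ring

lemma cr_nonneg {σ : Finset V} (hne : σ.Nonempty) {w : V} (hw : w ∉ σ) {x : V → ℝ}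
    (h0 : ∀ v, 0 ≤ x v) {t : ℝ} (ht0 : 0 ≤ t) (ht1 : t ≤ 1) :
    ∀ v, 0 ≤ cr σ hne w t x v := by
  intro v
  have hmn := cm_nonneg hne h0 (x := x)
  have htm : t * cm σ hne x ≤ cm σ hne x := by nlinarith
  have htm0 : 0 ≤ t * cm σ hne x := mul_nonneg ht0 hmn
  unfold cr
  by_cases hv : v ∈ σ
  · have hvw : v ≠ w := fun h => hw (h ▸ hv)
    rw [if_pos hv, if_neg hvw]
    have h3 : cm σ hne x ≤ x v := Finset.inf'_le x hv
    linarith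
  · rw [if_neg hv]
    split_ifs
    · have : (0:ℝ) ≤ (σ.card : ℝ) * (t * cm σ hne x) :=
        mul_nonneg (by positivity) htm0
      linarith [h0 v]
    · simpa using h0 v

lemma cr_mem {K : SComplex V} {σ : Finset V} (hne : σ.Nonempty) {w : V} (hw : w ∉ σ)
    (hτ : insert w σ ∈ K.faces)
    (hfree : ∀ ρ ∈ K.faces, σ ⊆ ρ → ρ ⊆ insert w σ)
    {x : V → ℝ} (hx : x ∈ K.realization) {t : ℝ} (ht0 : 0 ≤ t) (ht1 : t ≤ 1) :
    cr σ hne w t x ∈ K.realization := by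
  obtain ⟨h0, h1, hface⟩ := hx
  refine ⟨cr_nonneg hne hw h0 ht0 ht1, by rw [cr_sum, h1], ?_⟩
  by_cases hm : cm σ hne x = 0
  · rw [cr_eq_self hm]
    exact hface
  · refine ⟨insert w σ, hτ, fun v hv => ?_⟩
    by_cases hvσ : v ∈ σ
    · exact Finset.mem_insert_of_mem hvσ
    · by_cases hvw : v = w
      · exact hvw ▸ Finset.mem_insert_self w σ
      · have heq : cr σ hne w t x v = x v := by simp [cr, hvσ, hvw]
        rw [heq] at hv
        have hvs : v ∈ suppF x := mem_suppF.2 hv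
        rcases supp_cases hne hw hfree ⟨h0, h1, hface⟩ hm with h | h
        · exact absurd (h ▸ hvs) hvσ
        · exact h ▸ hvs

lemma cr_one_mem {K : SComplex V} {σ : Finset V} (hne : σ.Nonempty) {w : V} (hw : w ∉ σ)
    (hτ : insert w σ ∈ K.faces)
    (hfree : ∀ ρ ∈ K.faces, σ ⊆ ρ → ρ ⊆ insert w σ)
    {x : V → ℝ} (hx : x ∈ K.realization) :
    cr σ hne w 1 x ∈ (collapsed K σ w hw hfree).realization := by
  obtain ⟨h0, h1, hface⟩ := hx
  have hx' : x ∈ K.realization := ⟨h0, h1, hface⟩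
  refine ⟨cr_nonneg hne hw h0 zero_le_one le_rfl, by rw [cr_sum, h1], ?_⟩
  by_cases hm : cm σ hne x = 0
  · rw [cr_eq_self hm]
    refine ⟨suppF x, ⟨suppF_mem_faces hx', ?_⟩, fun v hv => mem_suppF.2 hv⟩
    intro hmem
    have hσs : σ ⊆ suppF x := by
      rcases hmem with h | h
      · exact h ▸ subset_rfl
      · simp only [Set.mem_singleton_iff] at h
        exact (Finset.subset_insert w σ).trans (h ▸ subset_rfl)
    obtain ⟨v₀, hv₀, hveq⟩ := Finset.exists_mem_eq_inf' hne x
    have hne0 : x v₀ ≠ 0 := mem_suppF.1 (hσs hv₀)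
    exact hne0 (by rw [show x v₀ = cm σ hne x from hveq.symm, hm])
  · obtain ⟨v₀, hv₀, hveq⟩ := Finset.exists_mem_eq_inf' hne x
    refine ⟨(insert w σ).erase v₀, ⟨K.down_closed hτ (Finset.erase_subset _ _), ?_⟩,
      fun v hv => ?_⟩
    · intro hmem
      rcases hmem with h | h
      · rw [← h] at hv₀
        exact Finset.notMem_erase v₀ _ hv₀
      · simp only [Set.mem_singleton_iff] at h
        have hmm : v₀ ∈ insert w σ := Finset.mem_insert_of_mem hv₀
        rw [← h] at hmm
        exact Finset.notMem_erase v₀ _ hmm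
    · by_cases hvv₀ : v = v₀
      · exfalso
        subst hvv₀
        have hvw : v ≠ w := fun h => hw (h ▸ hv₀)
        have heq : cr σ hne w 1 x v = x v - cm σ hne x := by
          simp only [cr, if_pos hv₀, if_neg hvw]
          ring
        rw [heq, show cm σ hne x = x v from hveq] at hv
        simp at hv
      · rw [Finset.mem_erase]
        refine ⟨hvv₀, ?_⟩
        by_cases hvσ : v ∈ σ
        · exact Finset.mem_insert_of_mem hvσ
        · by_cases hvw : v = w
          · exact hvw ▸ Finset.mem_insert_self w σ
          · have heq : cr σ hne w 1 x v = x v := by simp [cr, hvσ, hvw]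
            rw [heq] at hv
            have hvs : v ∈ suppF x := mem_suppF.2 hv
            rcases supp_cases hne hw hfree hx' hm with h | h
            · exact absurd (h ▸ hvs) hvσ
            · exact h ▸ hvs

lemma collapsed_cm_zero {K : SComplex V} {σ : Finset V} (hne : σ.Nonempty) {w : V}
    (hw : w ∉ σ) (hfree : ∀ ρ ∈ K.faces, σ ⊆ ρ → ρ ⊆ insert w σ)
    {y : V → ℝ} (hy : y ∈ (collapsed K σ w hw hfree).realization) : cm σ hne y = 0 := by
  by_contra hm
  have hs := suppF_mem_faces hy
  have hσs : σ ⊆ suppF y := cm_pos_supp hne hy.1 hm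
  have hKs : suppF y ∈ K.faces := hs.1
  rcases sandwich hw hσs (hfree _ hKs hσs) with h | h
  · exact hs.2 (by simp [h])
  · exact hs.2 (by simp [h])

lemma collapse_hequiv {K : SComplex V} {σ : Finset V} (hne : σ.Nonempty) {w : V}
    (hw : w ∉ σ) (hτ : insert w σ ∈ K.faces)
    (hfree : ∀ ρ ∈ K.faces, σ ⊆ ρ → ρ ⊆ insert w σ) :
    Nonempty (ContinuousMap.HomotopyEquiv K.realization
      (collapsed K σ w hw hfree).realization) := by
  have hsub : (collapsed K σ w hw hfree).realization ⊆ K.realization := by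
    rintro y ⟨h0, h1, F, hF, hs⟩
    exact ⟨h0, h1, F, hF.1, hs⟩
  set f : C(K.realization, (collapsed K σ w hw hfree).realization) :=
    ⟨fun x => ⟨cr σ hne w 1 x.1, cr_one_mem hne hw hτ hfree x.2⟩, by
      apply Continuous.subtype_mk
      exact (cr_cont σ hne w).comp
        (continuous_subtype_val.prodMk continuous_const)⟩ with hf
  set g : C((collapsed K σ w hw hfree).realization, K.realization) :=
    ⟨fun y => ⟨y.1, hsub y.2⟩, Continuous.subtype_mk continuous_subtype_val _⟩ with hg
  refine ⟨⟨f, g, ?_, ?_⟩⟩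
  · refine ⟨⟨⟨fun p => ⟨cr σ hne w (1 - (p.1 : ℝ)) p.2.1,
        cr_mem hne hw hτ hfree p.2.2 (by linarith [p.1.2.2]) (by linarith [p.1.2.1])⟩, ?_⟩,
        ?_, ?_⟩⟩
    · apply Continuous.subtype_mk
      exact (cr_cont σ hne w).comp
        ((continuous_subtype_val.comp continuous_snd).prodMk
          (continuous_const.sub
            ((continuous_subtype_val.comp continuous_fst) : _)))
    · intro x
      simp only [Set.Icc.coe_zero, sub_zero]
      rfl
    · intro x
      apply Subtype.ext
      show cr σ hne w (1 - 1) x.1 = x.1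
      rw [sub_self]
      exact cr_zero σ hne w x.1
  · have heqid : f.comp g = ContinuousMap.id _ := by
      apply ContinuousMap.ext
      intro y
      apply Subtype.ext
      show cr σ hne w 1 y.1 = y.1
      exact cr_eq_self (collapsed_cm_zero hne hw hfree y.2) 1
    rw [heqid]

end Collapse

section Fold

variable {K : SComplex V} {a₁ a₂ : V}

/-- The (partial) fold map moving the weight at `a₂` to `a₁`. -/
def fr (a₁ a₂ : V) (t : ℝ) (x : V → ℝ) : V → ℝ := fun v =>
  x v + (if v = a₁ then t * x a₂ else 0) + (if v = a₂ then -(t * x a₂) else 0)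

lemma fr_cont (a₁ a₂ : V) : Continuous (fun p : (V → ℝ) × ℝ => fr a₁ a₂ p.2 p.1) := by
  apply continuous_pi
  intro v
  have hm : Continuous (fun p : (V → ℝ) × ℝ => p.2 * p.1 a₂) :=
    continuous_snd.mul ((continuous_apply a₂).comp continuous_fst)
  apply Continuous.add
  apply Continuous.add
  · exact (continuous_apply v).comp continuous_fst
  · split_ifs
    · exact hm
    · exact continuous_const
  · split_ifs
    · exact hm.neg
    · exact continuous_const

lemma fr_zero (x : V → ℝ) : fr a₁ a₂ 0 x = x := by funext v; simp [fr]

lemma fr_eq_self {x : V → ℝ} (h : x a₂ = 0) (t : ℝ) : fr a₁ a₂ t x = x := by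
  funext v; simp [fr, h]

lemma fr_sum (t : ℝ) (x : V → ℝ) : (∑ v, fr a₁ a₂ t x v) = ∑ v, x v := by
  unfold fr
  rw [Finset.sum_add_distrib, Finset.sum_add_distrib]
  rw [Finset.sum_ite_eq' Finset.univ a₁, Finset.sum_ite_eq' Finset.univ a₂]
  simp

lemma fr_one_a₂ (hne12 : a₁ ≠ a₂) (x : V → ℝ) : fr a₁ a₂ 1 x a₂ = 0 := by
  simp [fr, Ne.symm hne12]

lemma fr_mem (hne12 : a₁ ≠ a₂)
    (hdom : ∀ F ∈ K.faces, a₂ ∈ F → insert a₁ F ∈ K.faces)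
    {x : V → ℝ} (hx : x ∈ K.realization) {t : ℝ} (ht0 : 0 ≤ t) (ht1 : t ≤ 1) :
    fr a₁ a₂ t x ∈ K.realization := by
  obtain ⟨h0, h1, hface⟩ := hx
  have hx' : x ∈ K.realization := ⟨h0, h1, hface⟩
  refine ⟨?_, by rw [fr_sum, h1], ?_⟩
  · intro v
    unfold fr
    by_cases hv1 : v = a₁
    · have hne' : v ≠ a₂ := hv1 ▸ hne12
      rw [if_pos hv1, if_neg hne']
      have := mul_nonneg ht0 (h0 a₂)
      linarith [h0 v]
    · rw [if_neg hv1]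
      split_ifs with hv2
      · subst hv2
        nlinarith [h0 v]
      · linarith [h0 v]
  · by_cases h2 : x a₂ = 0
    · rw [fr_eq_self h2]
      exact hface
    · have ha₂s : a₂ ∈ suppF x := mem_suppF.2 h2
      refine ⟨insert a₁ (suppF x), hdom _ (suppF_mem_faces hx') ha₂s,
        fun v hv => ?_⟩
      by_cases hv1 : v = a₁
      · rw [hv1]
        exact Finset.mem_insert_self a₁ _
      · by_cases hv2 : v = a₂
        · exact Finset.mem_insert_of_mem (hv2 ▸ ha₂s)
        · have heq : fr a₁ a₂ t x v = x v := by simp [fr, hv1, hv2]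
          rw [heq] at hv
          exact Finset.mem_insert_of_mem (mem_suppF.2 hv)

lemma fold_hequiv (hne12 : a₁ ≠ a₂)
    (hdom : ∀ F ∈ K.faces, a₂ ∈ F → insert a₁ F ∈ K.faces) :
    Nonempty (ContinuousMap.HomotopyEquiv K.realization
      ({x | x ∈ K.realization ∧ x a₂ = 0} : Set (V → ℝ))) := by
  set S : Set (V → ℝ) := {x | x ∈ K.realization ∧ x a₂ = 0} with hS
  set f : C(K.realization, S) :=
    ⟨fun x => ⟨fr a₁ a₂ 1 x.1,
      ⟨fr_mem hne12 hdom x.2 zero_le_one le_rfl, fr_one_a₂ hne12 x.1⟩⟩, by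
      apply Continuous.subtype_mk
      exact (fr_cont a₁ a₂).comp (continuous_subtype_val.prodMk continuous_const)⟩ with hf
  set g : C(S, K.realization) :=
    ⟨fun y => ⟨y.1, y.2.1⟩, Continuous.subtype_mk continuous_subtype_val _⟩ with hg
  refine ⟨⟨f, g, ?_, ?_⟩⟩
  · refine ⟨⟨⟨fun p => ⟨fr a₁ a₂ (1 - (p.1 : ℝ)) p.2.1,
      fr_mem hne12 hdom p.2.2 (by linarith [p.1.2.2]) (by linarith [p.1.2.1])⟩, ?_⟩, ?_, ?_⟩⟩
    · apply Continuous.subtype_mk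
      exact (fr_cont a₁ a₂).comp
        ((continuous_subtype_val.comp continuous_snd).prodMk
          (continuous_const.sub
            ((continuous_subtype_val.comp continuous_fst) : _)))
    · intro x
      simp only [Set.Icc.coe_zero, sub_zero]
      rfl
    · intro x
      apply Subtype.ext
      show fr a₁ a₂ (1 - 1) x.1 = x.1
      rw [sub_self]
      exact fr_zero x.1
  · have heqid : f.comp g = ContinuousMap.id _ := by
      apply ContinuousMap.ext
      intro y
      apply Subtype.ext
      exact fr_eq_self y.2.2 1
    rw [heqid]

end Fold

section Main

/-- The complex `X` with the cone (apex `a₁`) over the closed star of `a₂` added. -/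
def XP (X : SComplex V) (a₁ a₂ : V) : SComplex V where
  faces := {H | H ∈ X.faces ∨ insert a₂ (H.erase a₁) ∈ X.faces}
  down_closed := by
    intro F G hF hGF
    rcases hF with h | h
    · exact Or.inl (X.down_closed h hGF)
    · exact Or.inr (X.down_closed h
        (Finset.insert_subset_insert _ (Finset.erase_subset_erase _ hGF)))

/-- The faces of `XP` that are not faces of `X`. -/
def bad (X : SComplex V) (a₁ a₂ : V) (H : Finset V) : Prop :=
  H ∉ X.faces ∧ insert a₂ (H.erase a₁) ∈ X.faces

lemma XP_faces (X : SComplex V) (a₁ a₂ : V) :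
    (XP X a₁ a₂).faces = X.faces ∪ {H | bad X a₁ a₂ H} := by
  ext H
  by_cases h : H ∈ X.faces <;> simp [XP, bad, h]

lemma bad_mem_a1 {X : SComplex V} {a₁ a₂ : V} {H : Finset V} (h : bad X a₁ a₂ H) :
    a₁ ∈ H := by
  by_contra h1
  have h2 := h.2
  rw [Finset.erase_eq_of_notMem h1] at h2
  exact h.1 (X.down_closed h2 (Finset.subset_insert _ _))

lemma XP_dom {X : SComplex V} {a₁ a₂ : V} (hne12 : a₁ ≠ a₂) :
    ∀ H ∈ (XP X a₁ a₂).faces, a₂ ∈ H → insert a₁ H ∈ (XP X a₁ a₂).faces := by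
  intro H hH h2
  refine Or.inr ?_
  show insert a₂ ((insert a₁ H).erase a₁) ∈ X.faces
  rw [Finset.erase_insert_eq_erase]
  rcases hH with h | h
  · have h2' : a₂ ∈ H.erase a₁ := Finset.mem_erase.2 ⟨Ne.symm hne12, h2⟩
    rw [Finset.insert_eq_self.2 h2']
    exact X.down_closed h (Finset.erase_subset _ _)
  · exact h

lemma bad_insert {X : SComplex V} {a₁ a₂ : V} {H : Finset V} (hne12 : a₁ ≠ a₂)
    (h : bad X a₁ a₂ H) (h2 : a₂ ∉ H) : bad X a₁ a₂ (insert a₂ H) := by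
  constructor
  · intro hmem
    exact h.1 (X.down_closed hmem (Finset.subset_insert _ _))
  · have he : (insert a₂ H).erase a₁ = insert a₂ (H.erase a₁) :=
      Finset.erase_insert_of_ne (Ne.symm hne12)
    rw [he, Finset.insert_idem]
    exact h.2

lemma bad_erase {X : SComplex V} {a₁ a₂ : V} {H : Finset V} (hne12 : a₁ ≠ a₂)
    (hX : ∀ G : Finset V, a₁ ∉ G → a₂ ∉ G →
      insert a₁ G ∈ X.faces → insert a₂ G ∈ X.faces →
      insert a₁ (insert a₂ G) ∈ X.faces)
    (h : bad X a₁ a₂ H) (h2 : a₂ ∈ H) : bad X a₁ a₂ (H.erase a₂) := by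
  have ha₁ : a₁ ∈ H := bad_mem_a1 h
  have h2' : a₂ ∈ H.erase a₁ := Finset.mem_erase.2 ⟨Ne.symm hne12, h2⟩
  have hkey : H.erase a₁ ∈ X.faces := by
    have hh := h.2
    rwa [Finset.insert_eq_self.2 h2'] at hh
  constructor
  · intro hmem
    set G := (H.erase a₁).erase a₂ with hG
    have hg1 : a₁ ∉ G := by simp [hG]
    have hg2 : a₂ ∉ G := by simp [hG]
    have e1 : insert a₁ G = H.erase a₂ := by
      ext v
      simp only [hG, Finset.mem_insert, Finset.mem_erase]
      constructor
      · rintro (rfl | ⟨hv2, hv1, hv⟩)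
        · exact ⟨hne12, ha₁⟩
        · exact ⟨hv2, hv⟩
      · rintro ⟨hv2, hv⟩
        by_cases hv1 : v = a₁
        · exact Or.inl hv1
        · exact Or.inr ⟨hv2, hv1, hv⟩
    have e2 : insert a₂ G = H.erase a₁ := Finset.insert_erase h2'
    have hA : insert a₁ G ∈ X.faces := by rw [e1]; exact hmem
    have hB : insert a₂ G ∈ X.faces := by rw [e2]; exact hkey
    have := hX G hg1 hg2 hA hB
    rw [e2, Finset.insert_erase ha₁] at this
    exact h.1 this
  · have he : (H.erase a₂).erase a₁ = (H.erase a₁).erase a₂ := by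
      ext v; simp only [Finset.mem_erase]; tauto
    rw [he, Finset.insert_erase h2']
    exact hkey

lemma chain (X : SComplex V) (a₁ a₂ : V) (hne12 : a₁ ≠ a₂) :
    ∀ (n : ℕ) (B : Finset (Finset V)), B.card ≤ n → (∀ ρ ∈ B, bad X a₁ a₂ ρ) →
    (∀ ρ ∈ B, (if a₂ ∈ ρ then ρ.erase a₂ else insert a₂ ρ) ∈ B) →
    ∀ (hdc : ∀ {F G : Finset V}, F ∈ (X.faces ∪ ↑B) → G ⊆ F → G ∈ (X.faces ∪ ↑B)),
    Nonempty (ContinuousMap.HomotopyEquiv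
      (SComplex.mk (X.faces ∪ ↑B) hdc).realization X.realization) := by
  intro n
  induction n with
  | zero =>
    intro B hcard _ _ hdc
    have hB : B = ∅ := Finset.card_eq_zero.1 (le_antisymm hcard (Nat.zero_le _))
    subst hB
    have hfeq : (SComplex.mk (X.faces ∪ ↑(∅ : Finset (Finset V))) hdc).faces = X.faces := by
      simp
    exact ⟨(Homeomorph.setCongr (realization_congr hfeq)).toHomotopyEquiv⟩
  | succ n ih =>
    intro B hcard hbad hpair hdc
    by_cases hB : B = ∅
    · subst hB
      have hfeq : (SComplex.mk (X.faces ∪ ↑(∅ : Finset (Finset V))) hdc).faces = X.faces := by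
        simp
      exact ⟨(Homeomorph.setCongr (realization_congr hfeq)).toHomotopyEquiv⟩
    · obtain ⟨ρ₀, hρ₀⟩ := Finset.nonempty_iff_ne_empty.2 hB
      set T := B.filter (fun ρ => a₂ ∉ ρ) with hT
      have hTne : T.Nonempty := by
        by_cases h2 : a₂ ∈ ρ₀
        · have hp := hpair ρ₀ hρ₀
          rw [if_pos h2] at hp
          exact ⟨ρ₀.erase a₂, Finset.mem_filter.2 ⟨hp, Finset.notMem_erase _ _⟩⟩
        · exact ⟨ρ₀, Finset.mem_filter.2 ⟨hρ₀, h2⟩⟩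
      obtain ⟨σ, hσT, hσmax⟩ := T.exists_max_image Finset.card hTne
      have hσB : σ ∈ B := (Finset.mem_filter.1 hσT).1
      have hσa₂ : a₂ ∉ σ := (Finset.mem_filter.1 hσT).2
      have hσbad : bad X a₁ a₂ σ := hbad σ hσB
      have hσne : σ.Nonempty := ⟨a₁, bad_mem_a1 hσbad⟩
      have hτB : insert a₂ σ ∈ B := by
        have hp := hpair σ hσB
        rwa [if_neg hσa₂] at hp
      set K := SComplex.mk (X.faces ∪ ↑B) hdc with hK
      have hτK : insert a₂ σ ∈ K.faces := Set.mem_union_right _ hτB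
      have hfree : ∀ ρ ∈ K.faces, σ ⊆ ρ → ρ ⊆ insert a₂ σ := by
        intro ρ hρ hσρ
        have hρ' : ρ ∈ X.faces ∪ ↑B := hρ
        rcases hρ' with h | h
        · exact absurd (X.down_closed h hσρ) hσbad.1
        · have hρB : ρ ∈ B := h
          by_cases h2 : a₂ ∈ ρ
          · have hpe := hpair ρ hρB
            rw [if_pos h2] at hpe
            have hTe : ρ.erase a₂ ∈ T :=
              Finset.mem_filter.2 ⟨hpe, Finset.notMem_erase _ _⟩
            have hsub : σ ⊆ ρ.erase a₂ := fun v hv =>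
              Finset.mem_erase.2 ⟨fun he => hσa₂ (he ▸ hv), hσρ hv⟩
            have heq : σ = ρ.erase a₂ :=
              Finset.eq_of_subset_of_card_le hsub (hσmax _ hTe)
            rw [heq, Finset.insert_erase h2]
          · have hTe : ρ ∈ T := Finset.mem_filter.2 ⟨hρB, h2⟩
            have heq : σ = ρ := Finset.eq_of_subset_of_card_le hσρ (hσmax _ hTe)
            rw [← heq]
            exact Finset.subset_insert _ _
      obtain ⟨E1⟩ := collapse_hequiv hσne hσa₂ hτK hfree
      set B' := (B.erase σ).erase (insert a₂ σ) with hB'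
      have hτσ : insert a₂ σ ≠ σ := fun h => hσa₂ (h ▸ Finset.mem_insert_self _ _)
      have hτbad : bad X a₁ a₂ (insert a₂ σ) := hbad _ hτB
      have hB'mem : ∀ {ρ : Finset V}, ρ ∈ B' ↔ ρ ≠ insert a₂ σ ∧ ρ ≠ σ ∧ ρ ∈ B := by
        intro ρ
        rw [hB']
        constructor
        · intro h
          obtain ⟨h1, h2⟩ := Finset.mem_erase.1 h
          obtain ⟨h3, h4⟩ := Finset.mem_erase.1 h2
          exact ⟨h1, h3, h4⟩
        · rintro ⟨h1, h2, h3⟩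
          exact Finset.mem_erase.2 ⟨h1, Finset.mem_erase.2 ⟨h2, h3⟩⟩
      have faces_eq : (collapsed K σ a₂ hσa₂ hfree).faces = X.faces ∪ ↑B' := by
        ext H
        simp only [collapsed, Set.mem_diff, Set.mem_union, Set.mem_insert_iff,
          Set.mem_singleton_iff, Finset.mem_coe]
        constructor
        · rintro ⟨h | h, hn⟩
          · exact Or.inl h
          · push_neg at hn
            exact Or.inr (hB'mem.2 ⟨hn.2, hn.1, h⟩)
        · rintro (h | h)
          · refine ⟨Or.inl h, ?_⟩
            rintro (rfl | rfl)
            · exact hσbad.1 h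
            · exact hτbad.1 h
          · obtain ⟨h1, h2, h3⟩ := hB'mem.1 h
            exact ⟨Or.inr h3, by rintro (rfl | rfl) <;> simp_all⟩
      have hdc' : ∀ {F G : Finset V}, F ∈ (X.faces ∪ ↑B') → G ⊆ F →
          G ∈ (X.faces ∪ ↑B') := by
        intro F G hF hGF
        rw [← faces_eq] at hF ⊢
        exact (collapsed K σ a₂ hσa₂ hfree).down_closed hF hGF
      have hcard' : B'.card ≤ n := by
        have h1 : insert a₂ σ ∈ B.erase σ := Finset.mem_erase.2 ⟨hτσ, hτB⟩
        have h2 := Finset.card_erase_lt_of_mem h1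
        have h3 := Finset.card_erase_lt_of_mem hσB
        rw [← hB'] at h2
        omega
      have hbad' : ∀ ρ ∈ B', bad X a₁ a₂ ρ := fun ρ hρ => hbad ρ (hB'mem.1 hρ).2.2
      have hpair' : ∀ ρ ∈ B', (if a₂ ∈ ρ then ρ.erase a₂ else insert a₂ ρ) ∈ B' := by
        intro ρ hρ
        obtain ⟨hn1, hn2, hρB⟩ := hB'mem.1 hρ
        have hp := hpair ρ hρB
        by_cases h2 : a₂ ∈ ρ
        · rw [if_pos h2] at hp ⊢
          refine hB'mem.2 ⟨?_, ?_, hp⟩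
          · intro he
            have : a₂ ∈ ρ.erase a₂ := he ▸ Finset.mem_insert_self a₂ σ
            exact Finset.notMem_erase _ _ this
          · intro he
            apply hn1
            rw [← Finset.insert_erase h2, he]
        · rw [if_neg h2] at hp ⊢
          refine hB'mem.2 ⟨?_, ?_, hp⟩
          · intro he
            apply hn2
            have := congrArg (fun s => Finset.erase s a₂) he
            simpa [Finset.erase_insert h2, Finset.erase_insert hσa₂] using this
          · intro he
            exact hσa₂ (he ▸ Finset.mem_insert_self a₂ ρ)
      obtain ⟨E2⟩ := ih B' hcard' hbad' hpair' hdc'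
      have hfe2 : (collapsed K σ a₂ hσa₂ hfree).realization
          = (SComplex.mk (X.faces ∪ ↑B') hdc').realization :=
        realization_congr faces_eq
      exact ⟨E1.trans ((Homeomorph.setCongr hfe2).toHomotopyEquiv.trans E2)⟩

end Main

section Transfer

variable (a₁ a₂ : V)

/-- Coordinate transfer from `V` to `Option V₀`. -/
def Phi (x : V → ℝ) : Option {v : V // v ≠ a₁ ∧ v ≠ a₂} → ℝ
  | none => x a₁
  | some v => x v.1

/-- Coordinate transfer from `Option V₀` to `V`. -/
def Psi (y : Option {v : V // v ≠ a₁ ∧ v ≠ a₂} → ℝ) : V → ℝ := fun v =>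
  if h1 : v = a₁ then y none else if h2 : v = a₂ then 0 else y (some ⟨v, h1, h2⟩)

lemma sum_split (hne12 : a₁ ≠ a₂) (x : V → ℝ) :
    ∑ v, x v = x a₁ + x a₂ + ∑ v : {v : V // v ≠ a₁ ∧ v ≠ a₂}, x v.1 := by
  have h1 : ∑ v : {v : V // v ≠ a₁ ∧ v ≠ a₂}, x v.1
      = ∑ v ∈ Finset.univ.filter (fun v => v ≠ a₁ ∧ v ≠ a₂), x v :=
    (Finset.sum_subtype _ (by simp) x).symm
  rw [h1, ← Finset.sum_filter_add_sum_filter_not Finset.univ (fun v => v = a₁ ∨ v = a₂) x]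
  have h2 : Finset.univ.filter (fun v => v = a₁ ∨ v = a₂) = ({a₁, a₂} : Finset V) := by
    ext v; simp
  have h3 : Finset.univ.filter (fun v => ¬(v = a₁ ∨ v = a₂))
      = Finset.univ.filter (fun v => v ≠ a₁ ∧ v ≠ a₂) := by
    ext v; simp [not_or]
  rw [h2, h3, Finset.sum_pair hne12]

variable {a₁ a₂}

lemma Phi_mem {X : SComplex V} (hne12 : a₁ ≠ a₂)
    {Y : SComplex (Option {v : V // v ≠ a₁ ∧ v ≠ a₂})}
    (hY₀ : ∀ G : Finset {v : V // v ≠ a₁ ∧ v ≠ a₂},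
      G.map ⟨some, Option.some_injective _⟩ ∈ Y.faces ↔
      G.map (Function.Embedding.subtype _) ∈ X.faces)
    (hY₁ : ∀ G : Finset {v : V // v ≠ a₁ ∧ v ≠ a₂},
      insert none (G.map ⟨some, Option.some_injective _⟩) ∈ Y.faces ↔
      (insert a₁ (G.map (Function.Embedding.subtype _)) ∈ X.faces ∨
       insert a₂ (G.map (Function.Embedding.subtype _)) ∈ X.faces))
    {x : V → ℝ} (hx : x ∈ (XP X a₁ a₂).realization) (h2 : x a₂ = 0) :
    Phi a₁ a₂ x ∈ Y.realization := by
  obtain ⟨h0, h1, hf⟩ := hx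
  have hs : suppF x ∈ (XP X a₁ a₂).faces := suppF_mem_faces ⟨h0, h1, hf⟩
  refine ⟨?_, ?_, ?_⟩
  · intro w
    rcases w with _ | v
    · exact h0 a₁
    · exact h0 v.1
  · rw [Fintype.sum_option]
    have hss := sum_split a₁ a₂ hne12 x
    rw [h2] at hss
    show x a₁ + ∑ v : {v : V // v ≠ a₁ ∧ v ≠ a₂}, x v.1 = 1
    rw [← h1, hss]
    ring
  · set G : Finset {v : V // v ≠ a₁ ∧ v ≠ a₂} :=
      Finset.univ.filter (fun v => v.1 ∈ suppF x) with hG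
    have hGmap : G.map (Function.Embedding.subtype _) = (suppF x).erase a₁ := by
      ext v
      simp only [Finset.mem_map, Function.Embedding.coe_subtype, Finset.mem_erase, hG,
        Finset.mem_filter, Finset.mem_univ, true_and]
      constructor
      · rintro ⟨u, hu, rfl⟩
        exact ⟨u.2.1, hu⟩
      · rintro ⟨hv1, hv⟩
        have hv2 : v ≠ a₂ := by
          rintro rfl
          exact (mem_suppF.1 hv) h2
        exact ⟨⟨v, hv1, hv2⟩, hv, rfl⟩
    by_cases ha₁ : a₁ ∈ suppF x
    · refine ⟨insert none (G.map ⟨some, Option.some_injective _⟩), ?_, ?_⟩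
      · rw [hY₁]
        rcases hs with h | h
        · left
          rw [hGmap, Finset.insert_erase ha₁]
          exact h
        · right
          rw [hGmap]
          exact h
      · intro w hw
        rcases w with _ | v
        · exact Finset.mem_insert_self _ _
        · refine Finset.mem_insert_of_mem ?_
          rw [Finset.mem_map]
          exact ⟨v, Finset.mem_filter.2
            ⟨Finset.mem_univ _, mem_suppF.2 (show x v.1 ≠ 0 from hw)⟩, rfl⟩
    · have hsX : suppF x ∈ X.faces := by
        by_cases hmem : suppF x ∈ X.faces
        · exact hmem
        · rcases hs with h | h
          · exact absurd h hmem
          · exact absurd (bad_mem_a1 ⟨hmem, h⟩) ha₁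
      have hGmap2 : G.map (Function.Embedding.subtype _) = suppF x := by
        rw [hGmap, Finset.erase_eq_of_notMem ha₁]
      refine ⟨G.map ⟨some, Option.some_injective _⟩, ?_, ?_⟩
      · rw [hY₀, hGmap2]
        exact hsX
      · intro w hw
        rcases w with _ | v
        · exact absurd (mem_suppF.2 (show x a₁ ≠ 0 from hw)) ha₁
        · rw [Finset.mem_map]
          exact ⟨v, Finset.mem_filter.2
            ⟨Finset.mem_univ _, mem_suppF.2 (show x v.1 ≠ 0 from hw)⟩, rfl⟩

lemma Psi_a₂ (hne12 : a₁ ≠ a₂) (y : Option {v : V // v ≠ a₁ ∧ v ≠ a₂} → ℝ) :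
    Psi a₁ a₂ y a₂ = 0 := by
  rw [Psi, dif_neg (Ne.symm hne12), dif_pos rfl]

lemma Psi_mem {X : SComplex V} (hne12 : a₁ ≠ a₂)
    {Y : SComplex (Option {v : V // v ≠ a₁ ∧ v ≠ a₂})}
    (hY₀ : ∀ G : Finset {v : V // v ≠ a₁ ∧ v ≠ a₂},
      G.map ⟨some, Option.some_injective _⟩ ∈ Y.faces ↔
      G.map (Function.Embedding.subtype _) ∈ X.faces)
    (hY₁ : ∀ G : Finset {v : V // v ≠ a₁ ∧ v ≠ a₂},
      insert none (G.map ⟨some, Option.some_injective _⟩) ∈ Y.faces ↔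
      (insert a₁ (G.map (Function.Embedding.subtype _)) ∈ X.faces ∨
       insert a₂ (G.map (Function.Embedding.subtype _)) ∈ X.faces))
    {y : Option {v : V // v ≠ a₁ ∧ v ≠ a₂} → ℝ} (hy : y ∈ Y.realization) :
    Psi a₁ a₂ y ∈ (XP X a₁ a₂).realization := by
  obtain ⟨h0, h1, hf⟩ := hy
  have hs : suppF y ∈ Y.faces := suppF_mem_faces ⟨h0, h1, hf⟩
  have e1 : Psi a₁ a₂ y a₁ = y none := by rw [Psi, dif_pos rfl]
  have e3 : ∀ v : {v : V // v ≠ a₁ ∧ v ≠ a₂}, Psi a₁ a₂ y v.1 = y (some v) := by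
    intro v
    rw [Psi, dif_neg v.2.1, dif_neg v.2.2]
  refine ⟨?_, ?_, ?_⟩
  · intro v
    rw [Psi]
    split_ifs
    · exact h0 none
    · exact le_rfl
    · exact h0 _
  · rw [sum_split a₁ a₂ hne12, e1, Psi_a₂ hne12]
    have e4 : ∑ v : {v : V // v ≠ a₁ ∧ v ≠ a₂}, Psi a₁ a₂ y v.1
        = ∑ v : {v : V // v ≠ a₁ ∧ v ≠ a₂}, y (some v) :=
      Finset.sum_congr rfl (fun v _ => e3 v)
    rw [e4]
    have h5 := Fintype.sum_option y
    rw [h5] at h1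
    linarith
  · set G : Finset {v : V // v ≠ a₁ ∧ v ≠ a₂} :=
      Finset.univ.filter (fun v => y (some v) ≠ 0) with hG
    by_cases hn : y none = 0
    · have hsupp : suppF y = G.map ⟨some, Option.some_injective _⟩ := by
        ext w
        rcases w with _ | v
        · simp [mem_suppF, hn, Finset.mem_map]
        · simp [mem_suppF, hG, Finset.mem_map]
      have hYG : G.map ⟨some, Option.some_injective _⟩ ∈ Y.faces := by
        rw [← hsupp]; exact hs
      have hXG : G.map (Function.Embedding.subtype _) ∈ X.faces := (hY₀ G).1 hYG
      refine ⟨G.map (Function.Embedding.subtype _), Or.inl hXG, ?_⟩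
      intro v hv
      rw [Psi] at hv
      split_ifs at hv with hv1 hv2
      · exact absurd hn hv
      · exact absurd rfl hv
      · rw [Finset.mem_map]
        exact ⟨⟨v, hv1, hv2⟩, Finset.mem_filter.2 ⟨Finset.mem_univ _, hv⟩, rfl⟩
    · have hsupp : suppF y = insert none (G.map ⟨some, Option.some_injective _⟩) := by
        ext w
        rcases w with _ | v
        · simp [mem_suppF, hn]
        · simp [mem_suppF, hG, Finset.mem_map]
      have hYG : insert none (G.map ⟨some, Option.some_injective _⟩) ∈ Y.faces := by
        rw [← hsupp]; exact hs
      have hd := (hY₁ G).1 hYG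
      have ha₁G : a₁ ∉ G.map (Function.Embedding.subtype _) := by
        rw [Finset.mem_map]
        rintro ⟨u, -, hu⟩
        exact u.2.1 hu
      have hface : insert a₁ (G.map (Function.Embedding.subtype _))
          ∈ (XP X a₁ a₂).faces := by
        rcases hd with h | h
        · exact Or.inl h
        · refine Or.inr ?_
          rw [Finset.erase_insert ha₁G]
          exact h
      refine ⟨insert a₁ (G.map (Function.Embedding.subtype _)), hface, ?_⟩
      intro v hv
      rw [Psi] at hv
      split_ifs at hv with hv1 hv2
      · rw [hv1]
        exact Finset.mem_insert_self _ _
      · exact absurd rfl hv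
      · exact Finset.mem_insert_of_mem (Finset.mem_map.2
          ⟨⟨v, hv1, hv2⟩, Finset.mem_filter.2 ⟨Finset.mem_univ _, hv⟩, rfl⟩)

lemma Psi_Phi (hne12 : a₁ ≠ a₂) {x : V → ℝ} (h2 : x a₂ = 0) :
    Psi a₁ a₂ (Phi a₁ a₂ x) = x := by
  funext v
  rw [Psi]
  split_ifs with hv1 hv2
  · rw [hv1]; rfl
  · rw [hv2, h2]
  · rfl

lemma Phi_Psi (y : Option {v : V // v ≠ a₁ ∧ v ≠ a₂} → ℝ) :
    Phi a₁ a₂ (Psi a₁ a₂ y) = y := by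
  funext w
  rcases w with _ | v
  · show Psi a₁ a₂ y a₁ = y none
    rw [Psi, dif_pos rfl]
  · show Psi a₁ a₂ y v.1 = y (some v)
    rw [Psi, dif_neg v.2.1, dif_neg v.2.2]

lemma Phi_cont : Continuous (Phi a₁ a₂ (V := V)) := by
  apply continuous_pi
  intro w
  rcases w with _ | v
  · exact continuous_apply a₁
  · exact continuous_apply v.1

lemma Psi_cont : Continuous (Psi a₁ a₂ (V := V)) := by
  apply continuous_pi
  intro v
  unfold Psi
  split_ifs
  · exact continuous_apply none
  · exact continuous_const
  · exact continuous_apply _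

end Transfer

end Statement0Proof

/-- Let `X` be a simplicial complex on `V` and `a₁ ≠ a₂`
vertices such that whenever `{a₁} ∪ G` and `{a₂} ∪ G` are faces (with
`G ⊆ V \ {a₁,a₂}`), so is `{a₁,a₂} ∪ G`.  Let `Y` be the complex on
`V₀ ∪ {a}` (`V₀ = V \ {a₁,a₂}`, `a` a new vertex, modeled by `none` in an
`Option` type) with `Y|_{V₀} = X|_{V₀}`, and `G ∪ {a} ∈ Y` iff `G ∪ {a₁} ∈ X`
or `G ∪ {a₂} ∈ X`.  Then `X` and `Y` are homotopy equivalent. -/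
theorem statement_0 {V : Type u} [Fintype V] (X : SComplex V) (a₁ a₂ : V)
    (hne : a₁ ≠ a₂)
    (hX : ∀ G : Finset V, a₁ ∉ G → a₂ ∉ G →
      insert a₁ G ∈ X.faces → insert a₂ G ∈ X.faces →
      insert a₁ (insert a₂ G) ∈ X.faces)
    (Y : SComplex (Option {v : V // v ≠ a₁ ∧ v ≠ a₂}))
    (hY₀ : ∀ G : Finset {v : V // v ≠ a₁ ∧ v ≠ a₂},
      G.map ⟨some, Option.some_injective _⟩ ∈ Y.faces ↔
      G.map (Function.Embedding.subtype _) ∈ X.faces)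
    (hY₁ : ∀ G : Finset {v : V // v ≠ a₁ ∧ v ≠ a₂},
      insert none (G.map ⟨some, Option.some_injective _⟩) ∈ Y.faces ↔
      (insert a₁ (G.map (Function.Embedding.subtype _)) ∈ X.faces ∨
       insert a₂ (G.map (Function.Embedding.subtype _)) ∈ X.faces)) :
    SComplex.HEquiv X Y := by
  classical
  open Statement0Proof in
  obtain ⟨E3⟩ := fold_hequiv (K := XP X a₁ a₂) hne (XP_dom hne)
  set Bd : Finset (Finset V) := Finset.univ.filter (bad X a₁ a₂) with hBd
  have hunion : X.faces ∪ ↑Bd = (XP X a₁ a₂).faces := by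
    rw [XP_faces]
    congr 1
    ext H
    simp [hBd]
  have hdc : ∀ {F G : Finset V}, F ∈ (X.faces ∪ ↑Bd) → G ⊆ F →
      G ∈ (X.faces ∪ ↑Bd) := by
    intro F G hF hGF
    rw [hunion] at hF ⊢
    exact (XP X a₁ a₂).down_closed hF hGF
  have hbadall : ∀ ρ ∈ Bd, bad X a₁ a₂ ρ := fun ρ h => (Finset.mem_filter.1 h).2
  have hpairall : ∀ ρ ∈ Bd, (if a₂ ∈ ρ then ρ.erase a₂ else insert a₂ ρ) ∈ Bd := by
    intro ρ hρ
    have hb := (Finset.mem_filter.1 hρ).2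
    by_cases h2 : a₂ ∈ ρ
    · rw [if_pos h2]
      exact Finset.mem_filter.2 ⟨Finset.mem_univ _, bad_erase hne hX hb h2⟩
    · rw [if_neg h2]
      exact Finset.mem_filter.2 ⟨Finset.mem_univ _, bad_insert hne hb h2⟩
  obtain ⟨E1⟩ := chain X a₁ a₂ hne Bd.card Bd le_rfl hbadall hpairall hdc
  have hre : (SComplex.mk (X.faces ∪ ↑Bd) hdc).realization = (XP X a₁ a₂).realization :=
    realization_congr hunion
  set S : Set (V → ℝ) := {x | x ∈ (XP X a₁ a₂).realization ∧ x a₂ = 0} with hS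
  have e : S ≃ₜ (Y.realization : Set _) :=
    Homeomorph.mk
      ⟨fun x => ⟨Phi a₁ a₂ x.1, Phi_mem hne hY₀ hY₁ x.2.1 x.2.2⟩,
       fun y => ⟨Psi a₁ a₂ y.1, Psi_mem hne hY₀ hY₁ y.2, Psi_a₂ hne y.1⟩,
       fun x => Subtype.ext (Psi_Phi hne x.2.2),
       fun y => Subtype.ext (Phi_Psi y.1)⟩
      (Continuous.subtype_mk (Phi_cont.comp continuous_subtype_val) _)
      (Continuous.subtype_mk (Psi_cont.comp continuous_subtype_val) _)
  exact ⟨E1.symm.trans ((Homeomorph.setCongr hre).toHomotopyEquiv.symm.symm.trans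
    (E3.trans e.toHomotopyEquiv))⟩

end
end

section
/- Let G be a bipartite graph with vertex set A ⊔ B and all edges between A and B, and let X be the simplicial complex on A ⊔ B whose Stanley–Reisner ideal is the edge ideal of G. Suppose a, a′ ∈ A are such that the set of neighbours of a′ in B contains the set of neighbours of a in B. Let Y be the induced subcomplex of X on (A \ {a′}) ∪ B. Then X and Y are homotopy equivalent. -/
/-!
Common infrastructure: abstract simplicial complexes, geometric realization,
homotopy equivalence, reduced simplicial cohomology, squarefree monomial ideals
(encoded as upward closed families of finite sets), Koszul-complex multigraded
Betti numbers, and letterplace ideals of posets.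
-/

noncomputable section

open Finset

attribute [local instance] Classical.propDecidable

universe u v w

/-- `A` is a maximal antichain of the poset `P`. -/
def IsMaxAntichainFinset {P : Type u} [PartialOrder P] (A : Finset P) : Prop :=
  IsAntichain (· ≤ ·) (A : Set P) ∧
    ∀ B : Finset P, IsAntichain (· ≤ ·) (B : Set P) → A ⊆ B → A = B

section AuxFold

variable {A : Type u} {B : Type v}

/-- The folding map on weight functions: move all weight from `a'` to `a`. -/
def rmapAux (a a' : A) (f : A ⊕ B → ℝ) : A ⊕ B → ℝ := fun v =>
  if v = Sum.inl a' then 0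
  else if v = Sum.inl a then f (Sum.inl a) + f (Sum.inl a') else f v

lemma rmapAux_eq (a a' : A) (hne : a ≠ a') (f : A ⊕ B → ℝ) (v : A ⊕ B) :
    rmapAux a a' f v = f v + f (Sum.inl a') *
      ((if v = Sum.inl a then (1:ℝ) else 0) - (if v = Sum.inl a' then (1:ℝ) else 0)) := by
  simp only [rmapAux]
  split_ifs with h1 h2 h3
  · subst h1; exact absurd (Sum.inl.inj h2).symm hne
  · subst h1; ring
  · subst h3; ring
  · ring

lemma rmapAux_sum [Fintype A] [Fintype B] (a a' : A) (hne : a ≠ a') (f : A ⊕ B → ℝ) :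
    ∑ v, rmapAux a a' f v = ∑ v, f v := by
  simp only [fun v => rmapAux_eq a a' hne f v]
  rw [Finset.sum_add_distrib, ← Finset.mul_sum, Finset.sum_sub_distrib]
  simp [Finset.sum_ite_eq']

lemma rmapAux_nonneg (a a' : A) (f : A ⊕ B → ℝ) (hf : ∀ v, 0 ≤ f v) (v : A ⊕ B) :
    0 ≤ rmapAux a a' f v := by
  unfold rmapAux
  split_ifs
  · exact le_refl 0
  · exact add_nonneg (hf _) (hf _)
  · exact hf v

lemma rmapAux_continuous (a a' : A) :
    Continuous (rmapAux (B := B) a a') := by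
  unfold rmapAux
  apply continuous_pi
  intro v
  split_ifs
  · exact continuous_const
  · exact (continuous_apply _).add (continuous_apply _)
  · exact continuous_apply v

lemma insert_face_aux (E : A → B → Prop) (a a' : A) (hN : ∀ b : B, E a b → E a' b)
    {F : Finset (A ⊕ B)} (hF : F ∈ (bipIndep E).faces) (ha' : Sum.inl a' ∈ F) :
    insert (Sum.inl a) F ∈ (bipIndep E).faces := by
  intro a₁ b h₁ h₂ hE
  have hb : Sum.inr b ∈ F := by
    rcases Finset.mem_insert.1 h₂ with h | h
    · exact absurd h (by simp)
    · exact h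
  rcases Finset.mem_insert.1 h₁ with h | h
  · have ha₁ : a₁ = a := Sum.inl.inj h
    subst ha₁
    exact hF a' b ha' hb (hN b hE)
  · exact hF a₁ b h hb hE

lemma htpy_mem_aux [Fintype A] [Fintype B] (E : A → B → Prop) (a a' : A)
    (hne : a ≠ a') (hN : ∀ b : B, E a b → E a' b)
    {f : A ⊕ B → ℝ} (hf : f ∈ (bipIndep E).realization)
    {s : ℝ} (hs0 : 0 ≤ s) (hs1 : s ≤ 1) :
    (fun v => (1 - s) * rmapAux a a' f v + s * f v) ∈ (bipIndep E).realization := by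
  obtain ⟨hpos, hsum, F, hF, hsupp⟩ := hf
  refine ⟨fun v => add_nonneg (mul_nonneg (by linarith) (rmapAux_nonneg a a' f hpos v))
      (mul_nonneg hs0 (hpos v)), ?_, ?_⟩
  · rw [Finset.sum_add_distrib, ← Finset.mul_sum, ← Finset.mul_sum,
      rmapAux_sum a a' hne f, hsum]
    ring
  · by_cases h0 : f (Sum.inl a') = 0
    · refine ⟨F, hF, fun v hv => hsupp v ?_⟩
      have hr : rmapAux a a' f v = f v := by
        rw [rmapAux_eq a a' hne, h0]; ring
      intro hz
      exact hv (show (1 - s) * rmapAux a a' f v + s * f v = 0 by rw [hr, hz]; ring)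
    · have ha'F : Sum.inl a' ∈ F := hsupp _ h0
      refine ⟨insert (Sum.inl a) F, insert_face_aux E a a' hN hF ha'F, ?_⟩
      intro v hv
      by_cases hva : v = Sum.inl a
      · subst hva; exact Finset.mem_insert_self _ _
      · apply Finset.mem_insert_of_mem
        by_cases hva' : v = Sum.inl a'
        · subst hva'; exact ha'F
        · apply hsupp v
          have hr : rmapAux a a' f v = f v := by
            unfold rmapAux; rw [if_neg hva', if_neg hva]
          intro hz
          exact hv (show (1 - s) * rmapAux a a' f v + s * f v = 0 by rw [hr, hz]; ring)

lemma rmap_mem_Y_aux [Fintype A] [Fintype B] (E : A → B → Prop) (a a' : A)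
    (hne : a ≠ a') (hN : ∀ b : B, E a b → E a' b)
    {f : A ⊕ B → ℝ} (hf : f ∈ (bipIndep E).realization) :
    rmapAux a a' f ∈
      ((bipIndep E).restrict {x : A ⊕ B | x ≠ Sum.inl a'}).realization := by
  obtain ⟨hpos, hsum, F, hF, hsupp⟩ := hf
  refine ⟨rmapAux_nonneg a a' f hpos, by rw [rmapAux_sum a a' hne f, hsum], ?_⟩
  by_cases h0 : f (Sum.inl a') = 0
  · refine ⟨F.erase (Sum.inl a'), ⟨(bipIndep E).down_closed hF (Finset.erase_subset _ _),
      fun v hv => (Finset.mem_erase.1 hv).1⟩, ?_⟩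
    intro v hv
    have hr : rmapAux a a' f v = f v := by
      rw [rmapAux_eq a a' hne, h0]; ring
    rw [hr] at hv
    refine Finset.mem_erase.2 ⟨?_, hsupp v hv⟩
    intro hva'
    exact hv (hva' ▸ h0)
  · have ha'F : Sum.inl a' ∈ F := hsupp _ h0
    refine ⟨(insert (Sum.inl a) F).erase (Sum.inl a'),
      ⟨(bipIndep E).down_closed (insert_face_aux E a a' hN hF ha'F)
        (Finset.erase_subset _ _), fun v hv => (Finset.mem_erase.1 hv).1⟩, ?_⟩
    intro v hv
    have hva' : v ≠ Sum.inl a' := by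
      intro h; apply hv; rw [h]; unfold rmapAux; rw [if_pos rfl]
    refine Finset.mem_erase.2 ⟨hva', ?_⟩
    by_cases hva : v = Sum.inl a
    · subst hva; exact Finset.mem_insert_self _ _
    · apply Finset.mem_insert_of_mem
      apply hsupp v
      intro hz
      apply hv
      unfold rmapAux
      rw [if_neg hva', if_neg hva, hz]

lemma restrict_real_subset_aux {V : Type u} [Fintype V] (X : SComplex V) (S : Set V) :
    (X.restrict S).realization ⊆ X.realization := by
  rintro f ⟨h1, h2, F, hF, h3⟩
  exact ⟨h1, h2, F, hF.1, h3⟩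

end AuxFold

/-- Let `X` be the independence complex of a bipartite graph
with parts `A`, `B` and edge relation `E`, and let `a, a'` be distinct
vertices of `A` such that the neighbourhood of `a'` contains that of `a`.
Then `X` is homotopy equivalent to the induced subcomplex of `X` on
`(A \ {a'}) ∪ B`. -/
theorem statement_1 {A B : Type u} [Fintype A] [Fintype B] (E : A → B → Prop)
    (a a' : A) (hne : a ≠ a') (hN : ∀ b : B, E a b → E a' b) :
    SComplex.HEquiv (bipIndep E)
      ((bipIndep E).restrict {x : A ⊕ B | x ≠ Sum.inl a'}) := by
  classical
  set Xr := (bipIndep E).realization with hXr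
  set Yr := ((bipIndep E).restrict {x : A ⊕ B | x ≠ Sum.inl a'}).realization with hYr
  let r : C(Xr, Yr) :=
    ⟨fun p => ⟨rmapAux a a' p.1, rmap_mem_Y_aux E a a' hne hN p.2⟩,
      (((rmapAux_continuous (B := B) a a').comp continuous_subtype_val).subtype_mk _)⟩
  let i : C(Yr, Xr) :=
    ⟨fun p => ⟨p.1, restrict_real_subset_aux _ _ p.2⟩,
      continuous_subtype_val.subtype_mk _⟩
  refine ⟨⟨r, i, ?_, ?_⟩⟩
  · -- i ∘ r homotopic to id on Xr via linear homotopy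
    have hcont : Continuous (fun q : unitInterval × Xr => fun v =>
        (1 - (q.1 : ℝ)) * rmapAux a a' q.2.1 v + (q.1 : ℝ) * q.2.1 v) := by
      apply continuous_pi
      intro v
      have h1 : Continuous fun q : unitInterval × Xr => (q.1 : ℝ) :=
        continuous_subtype_val.comp continuous_fst
      have h2 : Continuous fun q : unitInterval × Xr => q.2.1 v :=
        (continuous_apply v).comp (continuous_subtype_val.comp continuous_snd)
      have h3 : Continuous fun q : unitInterval × Xr => rmapAux a a' q.2.1 v :=
        (continuous_apply v).comp ((rmapAux_continuous a a').comp
          (continuous_subtype_val.comp continuous_snd))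
      exact ((continuous_const.sub h1).mul h3).add (h1.mul h2)
    let H0 : C(unitInterval × Xr, Xr) :=
      ⟨fun q => ⟨fun v => (1 - (q.1 : ℝ)) * rmapAux a a' q.2.1 v + (q.1 : ℝ) * q.2.1 v,
        htpy_mem_aux E a a' hne hN q.2.2 q.1.2.1 q.1.2.2⟩, hcont.subtype_mk _⟩
    refine ⟨⟨H0, ?_, ?_⟩⟩
    · intro x
      apply Subtype.ext
      funext v
      show (1 - ((0 : unitInterval) : ℝ)) * rmapAux a a' x.1 v
          + ((0 : unitInterval) : ℝ) * x.1 v = rmapAux a a' x.1 v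
      norm_num
    · intro x
      apply Subtype.ext
      funext v
      show (1 - ((1 : unitInterval) : ℝ)) * rmapAux a a' x.1 v
          + ((1 : unitInterval) : ℝ) * x.1 v = x.1 v
      norm_num
  · -- r ∘ i is equal to id on Yr
    have heq : r.comp i = ContinuousMap.id Yr := by
      apply ContinuousMap.ext
      intro p
      apply Subtype.ext
      funext v
      show rmapAux a a' p.1 v = p.1 v
      obtain ⟨_, _, F, hF, hsupp⟩ := p.2
      have h0 : p.1 (Sum.inl a') = 0 := by
        by_contra h
        exact (hF.2 _ (hsupp _ h)) rfl
      rw [rmapAux_eq a a' hne, h0]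
      ring
    rw [heq]

end
end

section
/- Let G be a bipartite graph with vertex set A ⊔ B and all edges between A and B, and let X be the simplicial complex on A ⊔ B whose Stanley–Reisner ideal is the edge ideal of G. Let Y be the simplicial complex on B consisting of all subsets b ⊆ B such that b ∪ {a} is a face of X for some a ∈ A (equivalently, there is some a ∈ A with no edge from a to any element of b). Then X is homotopy equivalent to the suspension of Y. -/
/-!
Common infrastructure: abstract simplicial complexes, geometric realization,
homotopy equivalence, reduced simplicial cohomology, squarefree monomial ideals
(encoded as upward closed families of finite sets), Koszul-complex multigraded
Betti numbers, and letterplace ideals of posets.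
-/

noncomputable section

open Finset

attribute [local instance] Classical.propDecidable

universe u v w

/-- The simplicial complex `Y` on `B` consisting of the subsets `F ⊆ B` such
that `F ∪ {a}` is independent for some `a ∈ A`, i.e. some `a ∈ A` has no edge
to any element of `F`. -/
def nbrComplex {A : Type u} {B : Type v} (E : A → B → Prop) : SComplex B where
  faces := {F | ∃ a : A, ∀ b ∈ F, ¬ E a b}
  down_closed := by
    rintro F G ⟨a, ha⟩ hGF
    exact ⟨a, fun b hb => ha b (hGF hb)⟩


/-! ### Auxiliary material for the proof of Statement 2 -/

set_option linter.unusedSectionVars false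
set_option linter.unusedVariables false

section Statement2Aux

open Filter Topology

/-- Key continuity lemma: `c * (u / v)` is continuous provided `0 ≤ u ≤ v`,
`0 ≤ c`, and `c` vanishes whenever `v` does. -/
theorem cont_mul_div {S : Type*} [TopologicalSpace S] {c u v : S → ℝ}
    (hc : Continuous c) (hu : Continuous u) (hv : Continuous v)
    (hu0 : ∀ s, 0 ≤ u s) (huv : ∀ s, u s ≤ v s) (hc0 : ∀ s, 0 ≤ c s)
    (hvc : ∀ s, v s = 0 → c s = 0) :
    Continuous fun s => c s * (u s / v s) := by
  rw [continuous_iff_continuousAt]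
  intro s0
  by_cases h : v s0 = 0
  · have hval : c s0 * (u s0 / v s0) = 0 := by rw [hvc s0 h]; ring
    unfold ContinuousAt
    rw [show (fun s => c s * (u s / v s)) s0 = 0 from hval]
    refine squeeze_zero (f := fun s => c s * (u s / v s)) (g := c) (fun s => ?_) (fun s => ?_) ?_
    · exact mul_nonneg (hc0 s) (div_nonneg (hu0 s) ((hu0 s).trans (huv s)))
    · have h1 : u s / v s ≤ 1 := by
        rcases eq_or_lt_of_le ((hu0 s).trans (huv s)) with h' | h'
        · rw [← h', div_zero]; norm_num
        · exact div_le_one_of_le₀ (huv s) h'.le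
      calc c s * (u s / v s) ≤ c s * 1 := mul_le_mul_of_nonneg_left h1 (hc0 s)
        _ = c s := mul_one _
    · have h2 := hc.continuousAt (x := s0)
      unfold ContinuousAt at h2
      rwa [show c s0 = 0 from hvc s0 h] at h2
  · exact (hc.continuousAt).mul ((hu.continuousAt).div (hv.continuousAt) h)

/-- Straight-line homotopy between two maps into the realization of a
simplicial complex, provided the supports of the two maps always lie in a
common face. -/
noncomputable def lineHomotopy {V : Type u} [Fintype V] (K : SComplex V) {Z : Type w}
    [TopologicalSpace Z] (U W : C(Z, K.realization))
    (h : ∀ z, ∃ F ∈ K.faces, ∀ v, ((U z).1 v ≠ 0 ∨ (W z).1 v ≠ 0) → v ∈ F) :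
    U.Homotopy W where
  toFun := fun p =>
    ⟨fun v => (1 - (p.1 : ℝ)) * (U p.2).1 v + (p.1 : ℝ) * (W p.2).1 v, by
      obtain ⟨F, hF, hsupp⟩ := h p.2
      have ht0 : (0:ℝ) ≤ (p.1 : ℝ) := p.1.2.1
      have ht1 : (p.1 : ℝ) ≤ 1 := p.1.2.2
      refine ⟨fun v => ?_, ?_, F, hF, fun v hv => ?_⟩
      · have h1 := (U p.2).2.1 v
        have h2 := (W p.2).2.1 v
        have : (0:ℝ) ≤ 1 - (p.1 : ℝ) := by linarith
        positivity
      · rw [Finset.sum_add_distrib, ← Finset.mul_sum, ← Finset.mul_sum,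
          (U p.2).2.2.1, (W p.2).2.2.1]
        ring
      · refine hsupp v ?_
        by_contra hcon
        push_neg at hcon
        have hv' : (1 - (p.1 : ℝ)) * (U p.2).1 v + (p.1 : ℝ) * (W p.2).1 v ≠ 0 := hv
        rw [hcon.1, hcon.2] at hv'
        simp at hv'⟩
  continuous_toFun := by
    refine Continuous.subtype_mk ?_ _
    refine continuous_pi fun v => ?_
    have ht : Continuous fun p : unitInterval × Z => (p.1 : ℝ) :=
      continuous_subtype_val.comp continuous_fst
    have hU : Continuous fun p : unitInterval × Z => (U p.2).1 v :=
      (continuous_apply v).comp (continuous_subtype_val.comp (U.continuous.comp continuous_snd))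
    have hW : Continuous fun p : unitInterval × Z => (W p.2).1 v :=
      (continuous_apply v).comp (continuous_subtype_val.comp (W.continuous.comp continuous_snd))
    exact ((continuous_const.sub ht).mul hU).add (ht.mul hW)
  map_zero_left := fun z => Subtype.ext (funext fun v => by norm_num)
  map_one_left := fun z => Subtype.ext (funext fun v => by norm_num)

variable {A B : Type u} [Fintype A] [Fintype B]

/-- Total mass on the `A` side. -/
def sInA (f : A ⊕ B → ℝ) : ℝ := ∑ a, f (Sum.inl a)

/-- Total mass on the `B` side. -/
def sInB (f : A ⊕ B → ℝ) : ℝ := ∑ b, f (Sum.inr b)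

variable (E : A → B → Prop)

/-- Mass of `f` on the neighbours of `a`. -/
def dMass (a : A) (f : A ⊕ B → ℝ) : ℝ := ∑ b, if E a b then f (Sum.inr b) else 0


/-! #### Raw formulas for the maps -/

/-- `[x]₊`-style helper lemma. -/
theorem pos_of_max_ne_zero {x : ℝ} (h : max x 0 ≠ 0) : 0 < x := by
  by_contra h'
  push_neg at h'
  exact h (max_eq_right h')

/-- Truncation threshold `s = [α − β]₊` for the `X`-side maps. -/
def sS (f : A ⊕ B → ℝ) : ℝ := max (sInA f - sInB f) 0

/-- Truncated renormalized `B`-part. -/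
def Yt (f : A ⊕ B → ℝ) (b : B) : ℝ :=
  max ((1 - sS f) * (f (Sum.inr b) / sInB f) - sS f) 0

/-- Total truncated `B`-mass. -/
def SYt (f : A ⊕ B → ℝ) : ℝ := ∑ b, Yt f b

/-- Witness weight of `a`. -/
def wT (a : A) (f : A ⊕ B → ℝ) : ℝ :=
  max (sS f - (1 - sS f) * (dMass E a f / sInB f)) 0

/-- Total witness weight. -/
def SW (f : A ⊕ B → ℝ) : ℝ := ∑ a, wT E a f

/-- First intermediate map on the `X` side. -/
def q2raw (f : A ⊕ B → ℝ) : A ⊕ B → ℝ :=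
  Sum.elim (fun a => (1 - SYt f) * (f (Sum.inl a) / sInA f)) (fun b => Yt f b)

/-- Second intermediate map on the `X` side. -/
def q3raw (f : A ⊕ B → ℝ) : A ⊕ B → ℝ :=
  Sum.elim (fun a => (1 - SYt f) * (wT E a f / SW E f)) (fun b => Yt f b)

/-- The map `|X| → |ΣY|`. -/
def phiRaw (f : A ⊕ B → ℝ) : B ⊕ Bool → ℝ :=
  Sum.elim (fun b => min (2 * sInA f) (2 * sInB f) * (f (Sum.inr b) / sInB f))
    (fun s => if s then max (sInB f - sInA f) 0 else max (sInA f - sInB f) 0)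

/-- `t₀`: mass at the pole `s₀ = inr false`. -/
def tP (g : B ⊕ Bool → ℝ) : ℝ := g (Sum.inr false)

/-- `t₁`: mass at the pole `s₁ = inr true`. -/
def tM (g : B ⊕ Bool → ℝ) : ℝ := g (Sum.inr true)

/-- Total `B`-mass on the suspension side. -/
def sY (g : B ⊕ Bool → ℝ) : ℝ := ∑ b, g (Sum.inl b)

/-- Truncated `B`-coordinates on the suspension side. -/
def yP (g : B ⊕ Bool → ℝ) (b : B) : ℝ := max (g (Sum.inl b) - tP g) 0

/-- Total truncated `B`-mass on the suspension side. -/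
def sYP (g : B ⊕ Bool → ℝ) : ℝ := ∑ b, yP g b

/-- Mass on the neighbours of `a`, suspension side. -/
def dMassY (a : A) (g : B ⊕ Bool → ℝ) : ℝ := ∑ b, if E a b then g (Sum.inl b) else 0

/-- Witness weight of `a`, suspension side. -/
def wYr (a : A) (g : B ⊕ Bool → ℝ) : ℝ := max (tP g - dMassY E a g) 0

/-- Total witness weight, suspension side. -/
def SWY (g : B ⊕ Bool → ℝ) : ℝ := ∑ a, wYr E a g

/-- The `A`-mass assigned by `ψ`. -/
def ccY (g : B ⊕ Bool → ℝ) : ℝ := tP g + sY g - sYP g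

/-- The map `|ΣY| → |X|`. -/
def psiRaw (g : B ⊕ Bool → ℝ) : A ⊕ B → ℝ :=
  Sum.elim (fun a => ccY g * (wYr E a g / SWY E g))
    (fun b => yP g b + tM g / (Fintype.card B : ℝ))

/-- `B`-mass of the intermediate map on the suspension side. -/
def coeH (g : B ⊕ Bool → ℝ) : ℝ :=
  1 - max (2 * ccY g - 1) 0 - tM g * max (1 - 2 * ccY g) 0

/-- Intermediate map on the suspension side. -/
def h1raw (g : B ⊕ Bool → ℝ) : B ⊕ Bool → ℝ :=
  Sum.elim (fun b => coeH g * (yP g b / sYP g))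
    (fun s => if s then tM g * max (1 - 2 * ccY g) 0 else max (2 * ccY g - 1) 0)

/-! #### Facts extracted from membership in the realizations -/

theorem memX_nonneg {f : A ⊕ B → ℝ} (hf : f ∈ (bipIndep E).realization) :
    ∀ v, 0 ≤ f v := hf.1

theorem memX_sum {f : A ⊕ B → ℝ} (hf : f ∈ (bipIndep E).realization) :
    sInA f + sInB f = 1 := by
  have h := hf.2.1
  rwa [Fintype.sum_sum_type] at h

theorem memX_indep {f : A ⊕ B → ℝ} (hf : f ∈ (bipIndep E).realization) :
    ∀ a b, f (Sum.inl a) ≠ 0 → f (Sum.inr b) ≠ 0 → ¬ E a b := by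
  obtain ⟨-, -, F, hF, hsub⟩ := hf
  intro a b ha hb
  exact hF a b (hsub _ ha) (hsub _ hb)

theorem memS_nonneg {g : B ⊕ Bool → ℝ}
    (hg : g ∈ (SComplex.suspension (nbrComplex E)).realization) : ∀ v, 0 ≤ g v := hg.1

theorem memS_sum {g : B ⊕ Bool → ℝ}
    (hg : g ∈ (SComplex.suspension (nbrComplex E)).realization) :
    sY g + (tM g + tP g) = 1 := by
  have h := hg.2.1
  rw [Fintype.sum_sum_type, Fintype.sum_bool] at h
  exact h

theorem memS_poles {g : B ⊕ Bool → ℝ}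
    (hg : g ∈ (SComplex.suspension (nbrComplex E)).realization) :
    tP g = 0 ∨ tM g = 0 := by
  by_contra h
  push_neg at h
  obtain ⟨-, -, F, hF, hsub⟩ := hg
  have h2 : (F.preimage Sum.inr Sum.inr_injective.injOn).card ≤ 1 := hF.2
  have hfm : false ∈ F.preimage Sum.inr Sum.inr_injective.injOn :=
    Finset.mem_preimage.mpr (hsub _ h.1)
  have htm : true ∈ F.preimage Sum.inr Sum.inr_injective.injOn :=
    Finset.mem_preimage.mpr (hsub _ h.2)
  have := Finset.card_le_one.mp h2 false hfm true htm
  simp at this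

theorem memS_witness {g : B ⊕ Bool → ℝ}
    (hg : g ∈ (SComplex.suspension (nbrComplex E)).realization) :
    ∃ a, ∀ b, g (Sum.inl b) ≠ 0 → ¬ E a b := by
  obtain ⟨-, -, F, hF, hsub⟩ := hg
  obtain ⟨a, ha⟩ := hF.1
  exact ⟨a, fun b hb => ha b (Finset.mem_preimage.mpr (hsub _ hb))⟩

/-! #### Basic estimates, `X` side -/

section Xside

variable {f : A ⊕ B → ℝ} (hn : ∀ v, 0 ≤ f v) (hs : sInA f + sInB f = 1)

include hn in
theorem sInA_nonneg : 0 ≤ sInA f := Finset.sum_nonneg fun a _ => hn _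

include hn in
theorem sInB_nonneg : 0 ≤ sInB f := Finset.sum_nonneg fun b _ => hn _

include hn in
theorem coordB_le_sInB (b : B) : f (Sum.inr b) ≤ sInB f :=
  Finset.single_le_sum (fun b _ => hn _) (Finset.mem_univ b)

include hn in
theorem sInB_pos_of_coord {b : B} (hb : f (Sum.inr b) ≠ 0) : 0 < sInB f :=
  lt_of_lt_of_le (lt_of_le_of_ne (hn _) (Ne.symm hb)) (coordB_le_sInB hn b)

include hn in
theorem dMass_nonneg (a : A) : 0 ≤ dMass E a f :=
  Finset.sum_nonneg fun b _ => by by_cases h : E a b <;> simp [h, hn]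

include hn in
theorem dMass_le_sInB (a : A) : dMass E a f ≤ sInB f :=
  Finset.sum_le_sum fun b _ => by by_cases h : E a b <;> simp [h, hn]

include hn in
theorem coord_le_dMass {a : A} {b : B} (hE : E a b) : f (Sum.inr b) ≤ dMass E a f := by
  rw [dMass]
  have h : ∀ b' ∈ Finset.univ, 0 ≤ (if E a b' then f (Sum.inr b') else 0) :=
    fun b' _ => by by_cases h : E a b' <;> simp [h, hn]
  have h2 := Finset.single_le_sum h (Finset.mem_univ b)
  simpa [hE] using h2

theorem dMass_eq_zero_of_indep
    (hind : ∀ a b, f (Sum.inl a) ≠ 0 → f (Sum.inr b) ≠ 0 → ¬ E a b)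
    {a : A} (ha : f (Sum.inl a) ≠ 0) : dMass E a f = 0 := by
  refine Finset.sum_eq_zero fun b _ => ?_
  by_cases h : E a b
  · simp only [h, if_true]
    by_contra hb
    exact hind a b ha hb h
  · simp [h]

theorem sS_nonneg : 0 ≤ sS f := le_max_right _ _

include hn hs in
theorem sS_le_one : sS f ≤ 1 := by
  have h1 := sInB_nonneg hn
  have : sInA f - sInB f ≤ 1 := by linarith
  exact max_le this zero_le_one

theorem Yt_nonneg (b : B) : 0 ≤ Yt f b := le_max_right _ _

include hn hs in
theorem Yt_le_ratio (b : B) : Yt f b ≤ f (Sum.inr b) / sInB f := by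
  have hr : 0 ≤ f (Sum.inr b) / sInB f := div_nonneg (hn _) (sInB_nonneg hn)
  have hss := sS_nonneg (f := f)
  have hs1 := sS_le_one hn hs
  refine max_le ?_ hr
  nlinarith

include hn hs in
theorem SYt_le_one : SYt f ≤ 1 := by
  have h1 : SYt f ≤ ∑ b, f (Sum.inr b) / sInB f :=
    Finset.sum_le_sum fun b _ => Yt_le_ratio hn hs b
  rw [← Finset.sum_div] at h1
  have h2 : (∑ b, f (Sum.inr b)) = sInB f := rfl
  rw [h2] at h1
  rcases eq_or_lt_of_le (sInB_nonneg hn (f := f)) with h | h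
  · rw [← h, div_zero] at h1; linarith
  · rw [div_self h.ne'] at h1; exact h1

theorem SYt_nonneg : 0 ≤ SYt f := Finset.sum_nonneg fun b _ => Yt_nonneg b

include hn in
theorem Yt_ne_imp {b : B} (h : Yt f b ≠ 0) :
    f (Sum.inr b) ≠ 0 ∧ sS f < (1 - sS f) * (f (Sum.inr b) / sInB f) := by
  have h1 := pos_of_max_ne_zero h
  have hss := sS_nonneg (f := f)
  constructor
  · intro hb
    rw [hb, zero_div, mul_zero] at h1
    linarith
  · linarith

theorem wT_ne_imp {a : A} (h : wT E a f ≠ 0) :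
    (1 - sS f) * (dMass E a f / sInB f) < sS f := by
  have h1 := pos_of_max_ne_zero h
  linarith

include hn hs in
theorem cross_indep {a : A} {b : B} (hw : wT E a f ≠ 0) (hy : Yt f b ≠ 0) : ¬ E a b := by
  intro hE
  have h1 := wT_ne_imp (E := E) hw
  have h2 := Yt_ne_imp hn hy
  have hb : 0 < f (Sum.inr b) := lt_of_le_of_ne (hn _) (Ne.symm h2.1)
  have hsB : 0 < sInB f := sInB_pos_of_coord hn h2.1
  have hd : f (Sum.inr b) ≤ dMass E a f := coord_le_dMass E hn hE
  have hdiv : f (Sum.inr b) / sInB f ≤ dMass E a f / sInB f := by gcongr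
  have hss1 := sS_le_one hn hs
  nlinarith

include hn hs in
theorem SW_zero_imp (hind : ∀ a b, f (Sum.inl a) ≠ 0 → f (Sum.inr b) ≠ 0 → ¬ E a b)
    (hSW : SW E f = 0) : SYt f = 1 := by
  by_cases hss : sS f = 0
  · have hB : sInB f ≠ 0 := by
      intro h0
      have : sInA f = 1 := by linarith
      have : sS f = 1 := by
        rw [sS, this, h0]
        norm_num
      rw [this] at hss; norm_num at hss
    have hYt : ∀ b, Yt f b = f (Sum.inr b) / sInB f := by
      intro b
      rw [Yt, hss]
      have h3 : 0 ≤ f (Sum.inr b) / sInB f := div_nonneg (hn _) (sInB_nonneg hn)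
      rw [sub_zero, sub_zero, one_mul]
      exact max_eq_left h3
    rw [SYt]
    simp only [hYt]
    rw [← Finset.sum_div]
    have h2 : (∑ b, f (Sum.inr b)) = sInB f := rfl
    rw [h2, div_self hB]
  · exfalso
    have hss' : 0 < sS f := lt_of_le_of_ne (sS_nonneg) (Ne.symm hss)
    have hsA : sInA f ≠ 0 := by
      intro h0
      have h1 := sInB_nonneg hn (f := f)
      have : sInA f - sInB f ≤ 0 := by linarith [h1, h0.le]
      rw [sS, max_eq_right this] at hss'
      linarith
    obtain ⟨a, -, ha⟩ := Finset.exists_ne_zero_of_sum_ne_zero hsA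
    have hd : dMass E a f = 0 := dMass_eq_zero_of_indep (E := E) hind ha
    have hw : wT E a f = sS f := by
      rw [wT, hd, zero_div, mul_zero, sub_zero]
      exact max_eq_left hss'.le
    have hle : wT E a f ≤ SW E f := by
      rw [SW]
      exact Finset.single_le_sum (f := fun a' => wT E a' f)
        (fun a' _ => le_max_right _ _) (Finset.mem_univ a)
    rw [hSW, hw] at hle
    linarith

end Xside


/-! #### Basic estimates, suspension side -/

section Sside

variable {g : B ⊕ Bool → ℝ} (hn : ∀ v, 0 ≤ g v) (hs : sY g + (tM g + tP g) = 1)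

include hn in
theorem sY_nonneg : 0 ≤ sY g := Finset.sum_nonneg fun b _ => hn _

include hn in
theorem coordY_le_sY (b : B) : g (Sum.inl b) ≤ sY g :=
  Finset.single_le_sum (f := fun b' => g (Sum.inl b')) (fun b' _ => hn _) (Finset.mem_univ b)

theorem yP_nonneg (b : B) : 0 ≤ yP g b := le_max_right _ _

include hn in
theorem yP_le_coord (b : B) : yP g b ≤ g (Sum.inl b) := by
  have h1 : 0 ≤ tP g := hn (Sum.inr false)
  exact max_le (by linarith) (hn _)

theorem sYP_nonneg : 0 ≤ sYP g := Finset.sum_nonneg fun b _ => yP_nonneg b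

include hn in
theorem sYP_le_sY : sYP g ≤ sY g := Finset.sum_le_sum fun b _ => yP_le_coord hn b

include hn in
theorem ccY_nonneg : 0 ≤ ccY g := by
  have h1 := sYP_le_sY hn (g := g)
  have h2 : 0 ≤ tP g := hn (Sum.inr false)
  rw [ccY]
  linarith

include hn hs in
theorem ccY_le_one : ccY g ≤ 1 := by
  have h1 := sYP_nonneg (g := g)
  have h2 : 0 ≤ tM g := hn (Sum.inr true)
  rw [ccY]
  linarith

include hn in
theorem dMassY_nonneg (a : A) : 0 ≤ dMassY E a g :=
  Finset.sum_nonneg fun b _ => by by_cases h : E a b <;> simp [h, hn]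

include hn in
theorem coordY_le_dMassY {a : A} {b : B} (hE : E a b) : g (Sum.inl b) ≤ dMassY E a g := by
  rw [dMassY]
  have h : ∀ b' ∈ Finset.univ, 0 ≤ (if E a b' then g (Sum.inl b') else 0) :=
    fun b' _ => by by_cases h : E a b' <;> simp [h, hn]
  have h2 := Finset.single_le_sum h (Finset.mem_univ b)
  simpa [hE] using h2

theorem wYr_nonneg (a : A) : 0 ≤ wYr E a g := le_max_right _ _

include hn in
theorem yP_ne_imp {b : B} (h : yP g b ≠ 0) : g (Sum.inl b) ≠ 0 ∧ tP g < g (Sum.inl b) := by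
  have h1 := pos_of_max_ne_zero h
  have h2 : 0 ≤ tP g := hn (Sum.inr false)
  constructor
  · intro hb; rw [tP] at h1 h2; rw [hb] at h1; linarith
  · linarith

theorem wYr_ne_imp {a : A} (h : wYr E a g ≠ 0) : dMassY E a g < tP g := by
  have h1 := pos_of_max_ne_zero h
  linarith

include hn in
theorem tP_zero_imp (h : tP g = 0) : sYP g = sY g ∧ ccY g = 0 := by
  have h1 : ∀ b, yP g b = g (Sum.inl b) := fun b => by
    rw [yP, h, sub_zero]
    exact max_eq_left (hn _)
  have h2 : sYP g = sY g := Finset.sum_congr rfl fun b _ => h1 b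
  exact ⟨h2, by rw [ccY, h, h2]; ring⟩

include hn in
theorem dMassY_zero_of_witness {a : A} (ha : ∀ b, g (Sum.inl b) ≠ 0 → ¬ E a b) :
    dMassY E a g = 0 := by
  refine Finset.sum_eq_zero fun b _ => ?_
  by_cases h : E a b
  · simp only [h, if_true]
    by_contra hb
    exact ha b hb h
  · simp [h]

include hn in
theorem SWY_zero_imp (hw : ∃ a, ∀ b, g (Sum.inl b) ≠ 0 → ¬ E a b)
    (hSWY : SWY E g = 0) : tP g = 0 ∧ ccY g = 0 := by
  obtain ⟨a, ha⟩ := hw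
  have hd : dMassY E a g = 0 := dMassY_zero_of_witness E hn ha
  have hw1 : wYr E a g = tP g := by
    rw [wYr, hd, sub_zero]
    exact max_eq_left (hn _)
  have hle : wYr E a g ≤ SWY E g := by
    rw [SWY]
    exact Finset.single_le_sum (f := fun a' => wYr E a' g)
      (fun a' _ => wYr_nonneg E a') (Finset.mem_univ a)
  rw [hSWY, hw1] at hle
  have h2 : 0 ≤ tP g := hn (Sum.inr false)
  have h3 : tP g = 0 := le_antisymm hle h2
  exact ⟨h3, (tP_zero_imp hn h3).2⟩

end Sside


/-! #### Membership of the maps in the realizations -/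

theorem wT_nonneg (a : A) {f : A ⊕ B → ℝ} : 0 ≤ wT E a f := le_max_right _ _

theorem SW_nonneg {f : A ⊕ B → ℝ} : 0 ≤ SW E f :=
  Finset.sum_nonneg fun a _ => wT_nonneg E a

theorem SWY_nonneg {g : B ⊕ Bool → ℝ} : 0 ≤ SWY E g :=
  Finset.sum_nonneg fun a _ => wYr_nonneg E a

theorem SYt_eq_one {f : A ⊕ B → ℝ} (hn : ∀ v, 0 ≤ f v) (hss : sS f = 0)
    (hB : sInB f ≠ 0) : SYt f = 1 := by
  have hYt : ∀ b, Yt f b = f (Sum.inr b) / sInB f := by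
    intro b
    rw [Yt, hss]
    have h3 : 0 ≤ f (Sum.inr b) / sInB f := div_nonneg (hn _) (sInB_nonneg hn)
    rw [sub_zero, sub_zero, one_mul]
    exact max_eq_left h3
  rw [SYt]
  simp only [hYt]
  rw [← Finset.sum_div]
  have h2 : (∑ b, f (Sum.inr b)) = sInB f := rfl
  rw [h2, div_self hB]

theorem mem_bipIndep_faces {F : Finset (A ⊕ B)}
    (h : ∀ a b, Sum.inl a ∈ F → Sum.inr b ∈ F → ¬ E a b) : F ∈ (bipIndep E).faces := h

theorem mem_susp_faces {F : Finset (B ⊕ Bool)}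
    (h1 : F.preimage Sum.inl Sum.inl_injective.injOn ∈ (nbrComplex E).faces)
    (h2 : (F.preimage Sum.inr Sum.inr_injective.injOn).card ≤ 1) :
    F ∈ (SComplex.suspension (nbrComplex E)).faces := ⟨h1, h2⟩

section Members

variable [Nonempty A] [Nonempty B]

theorem q2_mem {f : A ⊕ B → ℝ} (hf : f ∈ (bipIndep E).realization) :
    q2raw f ∈ (bipIndep E).realization := by
  have hn := memX_nonneg E hf
  have hs := memX_sum E hf
  have hY1 := SYt_le_one hn hs
  refine ⟨fun v => ?_, ?_, ?_⟩
  · rcases v with a | b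
    · simp only [q2raw, Sum.elim_inl]
      exact mul_nonneg (by linarith) (div_nonneg (hn _) (sInA_nonneg hn))
    · exact Yt_nonneg b
  · rw [Fintype.sum_sum_type]
    simp only [q2raw, Sum.elim_inl, Sum.elim_inr]
    rw [← Finset.mul_sum, ← Finset.sum_div]
    have h2 : (∑ a, f (Sum.inl a)) = sInA f := rfl
    have h3 : (∑ b, Yt f b) = SYt f := rfl
    rw [h2, h3]
    by_cases hA0 : sInA f = 0
    · have hB1 : sInB f = 1 := by linarith
      have hss : sS f = 0 := by
        rw [sS, hA0, hB1]; norm_num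
      have h4 : SYt f = 1 := SYt_eq_one hn hss (by rw [hB1]; norm_num)
      rw [hA0, h4]
      norm_num
    · rw [div_self hA0]
      ring
  · obtain ⟨-, -, F, hF, hsub⟩ := hf
    refine ⟨F, hF, fun v hv => ?_⟩
    rcases v with a | b
    · refine hsub _ ?_
      simp only [q2raw, Sum.elim_inl] at hv
      intro h0
      rw [h0, zero_div, mul_zero] at hv
      exact hv rfl
    · refine hsub _ ?_
      simp only [q2raw, Sum.elim_inr] at hv
      exact (Yt_ne_imp hn hv).1

theorem q3_mem {f : A ⊕ B → ℝ} (hf : f ∈ (bipIndep E).realization) :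
    q3raw E f ∈ (bipIndep E).realization := by
  have hn := memX_nonneg E hf
  have hs := memX_sum E hf
  have hind := memX_indep E hf
  have hY1 := SYt_le_one hn hs
  refine ⟨fun v => ?_, ?_, ?_⟩
  · rcases v with a | b
    · simp only [q3raw, Sum.elim_inl]
      exact mul_nonneg (by linarith) (div_nonneg (wT_nonneg E a) (SW_nonneg E))
    · exact Yt_nonneg b
  · rw [Fintype.sum_sum_type]
    simp only [q3raw, Sum.elim_inl, Sum.elim_inr]
    rw [← Finset.mul_sum, ← Finset.sum_div]
    have h2 : (∑ a, wT E a f) = SW E f := rfl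
    have h3 : (∑ b, Yt f b) = SYt f := rfl
    rw [h2, h3]
    by_cases hSW : SW E f = 0
    · have h4 := SW_zero_imp E hn hs hind hSW
      rw [hSW, h4]
      norm_num
    · rw [div_self hSW]
      ring
  · refine ⟨Finset.univ.filter (fun v => q3raw E f v ≠ 0), mem_bipIndep_faces E ?_,
      fun v hv => Finset.mem_filter.mpr ⟨Finset.mem_univ v, hv⟩⟩
    intro a b ha hb
    have ha' := (Finset.mem_filter.mp ha).2
    have hb' := (Finset.mem_filter.mp hb).2
    simp only [q3raw, Sum.elim_inl, Sum.elim_inr] at ha' hb'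
    have hw : wT E a f ≠ 0 := by
      intro h0
      rw [h0, zero_div, mul_zero] at ha'
      exact ha' rfl
    exact cross_indep E hn hs hw hb'

theorem phi_mem {f : A ⊕ B → ℝ} (hf : f ∈ (bipIndep E).realization) :
    phiRaw f ∈ (SComplex.suspension (nbrComplex E)).realization := by
  have hn := memX_nonneg E hf
  have hs := memX_sum E hf
  have hind := memX_indep E hf
  have hA := sInA_nonneg hn
  have hB := sInB_nonneg hn
  refine ⟨fun v => ?_, ?_, ?_⟩
  · rcases v with b | s
    · simp only [phiRaw, Sum.elim_inl]
      exact mul_nonneg (le_min (by linarith) (by linarith)) (div_nonneg (hn _) hB)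
    · cases s <;> simp only [phiRaw, Sum.elim_inr, if_true, if_false, Bool.false_eq_true] <;>
        exact le_max_right _ _
  · rw [Fintype.sum_sum_type, Fintype.sum_bool]
    simp only [phiRaw, Sum.elim_inl, Sum.elim_inr, if_true, if_false, Bool.false_eq_true]
    rw [← Finset.mul_sum, ← Finset.sum_div]
    have h2 : (∑ b, f (Sum.inr b)) = sInB f := rfl
    rw [h2]
    by_cases hB0 : sInB f = 0
    · have hA1 : sInA f = 1 := by linarith
      rw [hB0, hA1]
      norm_num
    · rw [div_self hB0, mul_one]
      rcases le_total (sInA f) (sInB f) with h | h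
      · rw [min_eq_left (by linarith), max_eq_left (by linarith), max_eq_right (by linarith)]
        linarith
      · rw [min_eq_right (by linarith), max_eq_right (by linarith), max_eq_left (by linarith)]
        linarith
  · refine ⟨Finset.univ.filter (fun v => phiRaw f v ≠ 0), mem_susp_faces E ?_ ?_,
      fun v hv => Finset.mem_filter.mpr ⟨Finset.mem_univ v, hv⟩⟩
    · by_cases hA0 : sInA f = 0
      · refine ⟨Classical.arbitrary A, fun b hb => ?_⟩
        exfalso
        have hb' := (Finset.mem_filter.mp (Finset.mem_preimage.mp hb)).2
        simp only [phiRaw, Sum.elim_inl] at hb'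
        rw [hA0, mul_zero] at hb'
        rw [min_eq_left (by linarith)] at hb'
        rw [zero_mul] at hb'
        exact hb' rfl
      · obtain ⟨a0, -, ha0⟩ := Finset.exists_ne_zero_of_sum_ne_zero hA0
        refine ⟨a0, fun b hb => ?_⟩
        have hb' := (Finset.mem_filter.mp (Finset.mem_preimage.mp hb)).2
        simp only [phiRaw, Sum.elim_inl] at hb'
        have hfb : f (Sum.inr b) ≠ 0 := by
          intro h0
          rw [h0, zero_div, mul_zero] at hb'
          exact hb' rfl
        exact hind a0 b ha0 hfb
    · rw [Finset.card_le_one]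
      intro u hu v hv
      have hu' := (Finset.mem_filter.mp (Finset.mem_preimage.mp hu)).2
      have hv' := (Finset.mem_filter.mp (Finset.mem_preimage.mp hv)).2
      cases u <;> cases v <;> first
        | rfl
        | (exfalso
           simp only [phiRaw, Sum.elim_inr, if_true, if_false, Bool.false_eq_true] at hu' hv'
           have h1 := pos_of_max_ne_zero hu'
           have h2 := pos_of_max_ne_zero hv'
           linarith)

theorem psi_mem {g : B ⊕ Bool → ℝ} (hg : g ∈ (SComplex.suspension (nbrComplex E)).realization) :
    psiRaw E g ∈ (bipIndep E).realization := by
  have hn := memS_nonneg E hg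
  have hs := memS_sum E hg
  have hwt := memS_witness E hg
  have hp := memS_poles E hg
  have hcc := ccY_nonneg hn
  have hcard : (0:ℝ) < (Fintype.card B : ℝ) := by
    exact_mod_cast Fintype.card_pos
  refine ⟨fun v => ?_, ?_, ?_⟩
  · rcases v with a | b
    · simp only [psiRaw, Sum.elim_inl]
      exact mul_nonneg hcc (div_nonneg (wYr_nonneg E a) (SWY_nonneg E))
    · simp only [psiRaw, Sum.elim_inr]
      exact add_nonneg (yP_nonneg b) (div_nonneg (hn _) hcard.le)
  · rw [Fintype.sum_sum_type]
    simp only [psiRaw, Sum.elim_inl, Sum.elim_inr]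
    rw [← Finset.mul_sum, ← Finset.sum_div, Finset.sum_add_distrib, Finset.sum_const,
      Finset.card_univ, nsmul_eq_mul]
    have h2 : (∑ a, wYr E a g) = SWY E g := rfl
    have h3 : (∑ b, yP g b) = sYP g := rfl
    rw [h2, h3]
    have h4 : (Fintype.card B : ℝ) * (tM g / (Fintype.card B : ℝ)) = tM g := by
      field_simp
    rw [h4]
    by_cases hS : SWY E g = 0
    · obtain ⟨h5, h6⟩ := SWY_zero_imp E hn hwt hS
      have h7 := (tP_zero_imp hn h5).1
      rw [hS, h6, h7]
      simp only [zero_div, mul_zero, zero_mul, zero_add]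
      linarith
    · rw [div_self hS, mul_one, ccY]
      linarith
  · refine ⟨Finset.univ.filter (fun v => psiRaw E g v ≠ 0), mem_bipIndep_faces E ?_,
      fun v hv => Finset.mem_filter.mpr ⟨Finset.mem_univ v, hv⟩⟩
    intro a b ha hb
    intro hE
    have ha' := (Finset.mem_filter.mp ha).2
    have hb' := (Finset.mem_filter.mp hb).2
    simp only [psiRaw, Sum.elim_inl, Sum.elim_inr] at ha' hb'
    have hwa : wYr E a g ≠ 0 := by
      intro h0
      rw [h0, zero_div, mul_zero] at ha'
      exact ha' rfl
    have h1 := wYr_ne_imp E hwa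
    have hd0 := dMassY_nonneg E hn a
    rcases hp with h | h
    · linarith
    · rw [h, zero_div, add_zero] at hb'
      have h2 := yP_ne_imp hn hb'
      have h3 := coordY_le_dMassY E hn hE
      linarith [h2.2]

theorem h1_mem {g : B ⊕ Bool → ℝ} (hg : g ∈ (SComplex.suspension (nbrComplex E)).realization) :
    h1raw g ∈ (SComplex.suspension (nbrComplex E)).realization := by
  have hn := memS_nonneg E hg
  have hs := memS_sum E hg
  have hwt := memS_witness E hg
  have hp := memS_poles E hg
  have hc0 := ccY_nonneg hn
  have hc1 := ccY_le_one hn hs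
  have htM0 : 0 ≤ tM g := hn (Sum.inr true)
  have htP0 : 0 ≤ tP g := hn (Sum.inr false)
  have hsY0 := sY_nonneg hn
  have htM1 : tM g ≤ 1 := by linarith
  have hcoe : 0 ≤ coeH g := by
    rw [coeH]
    rcases le_total (2 * ccY g) 1 with h | h
    · rw [max_eq_right (by linarith), max_eq_left (by linarith)]
      nlinarith
    · rw [max_eq_left (by linarith), max_eq_right (by linarith)]
      linarith
  refine ⟨fun v => ?_, ?_, ?_⟩
  · rcases v with b | s
    · simp only [h1raw, Sum.elim_inl]
      exact mul_nonneg hcoe (div_nonneg (yP_nonneg b) sYP_nonneg)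
    · cases s <;> simp only [h1raw, Sum.elim_inr, if_true, if_false, Bool.false_eq_true]
      · exact le_max_right _ _
      · exact mul_nonneg htM0 (le_max_right _ _)
  · rw [Fintype.sum_sum_type, Fintype.sum_bool]
    simp only [h1raw, Sum.elim_inl, Sum.elim_inr, if_true, if_false, Bool.false_eq_true]
    rw [← Finset.mul_sum, ← Finset.sum_div]
    have h3 : (∑ b, yP g b) = sYP g := rfl
    rw [h3]
    by_cases hY0 : sYP g = 0
    · rw [hY0]
      simp only [div_zero, mul_zero, zero_add]
      rcases hp with h | h
      · obtain ⟨h4, h5⟩ := tP_zero_imp hn h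
        have h6 : sY g = 0 := by rw [← h4, hY0]
        have h7 : tM g = 1 := by linarith
        rw [h5, h7]
        norm_num
      · have h6 : ccY g = 1 := by
          rw [ccY, hY0]
          linarith
        rw [h, h6]
        norm_num
    · rw [div_self hY0, mul_one, coeH]
      ring
  · refine ⟨Finset.univ.filter (fun v => h1raw g v ≠ 0), mem_susp_faces E ?_ ?_,
      fun v hv => Finset.mem_filter.mpr ⟨Finset.mem_univ v, hv⟩⟩
    · obtain ⟨a, ha⟩ := hwt
      refine ⟨a, fun b hb => ?_⟩
      have hb' := (Finset.mem_filter.mp (Finset.mem_preimage.mp hb)).2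
      simp only [h1raw, Sum.elim_inl] at hb'
      have hyp : yP g b ≠ 0 := by
        intro h0
        rw [h0, zero_div, mul_zero] at hb'
        exact hb' rfl
      exact ha b (yP_ne_imp hn hyp).1
    · rw [Finset.card_le_one]
      intro u hu v hv
      have hu' := (Finset.mem_filter.mp (Finset.mem_preimage.mp hu)).2
      have hv' := (Finset.mem_filter.mp (Finset.mem_preimage.mp hv)).2
      cases u <;> cases v <;> first
        | rfl
        | (exfalso
           simp only [h1raw, Sum.elim_inr, if_true, if_false, Bool.false_eq_true] at hu' hv'
           first
           | (have h1 := pos_of_max_ne_zero hu'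
              have h2 := pos_of_max_ne_zero (mul_ne_zero_iff.mp hv').2
              linarith)
           | (have h1 := pos_of_max_ne_zero hv'
              have h2 := pos_of_max_ne_zero (mul_ne_zero_iff.mp hu').2
              linarith))

end Members


/-! #### Additional small estimates -/

theorem coordA_le_sInA {f : A ⊕ B → ℝ} (hn : ∀ v, 0 ≤ f v) (a : A) :
    f (Sum.inl a) ≤ sInA f :=
  Finset.single_le_sum (f := fun a' => f (Sum.inl a')) (fun a' _ => hn _) (Finset.mem_univ a)

theorem wT_le_SW {f : A ⊕ B → ℝ} (a : A) : wT E a f ≤ SW E f :=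
  Finset.single_le_sum (f := fun a' => wT E a' f) (fun a' _ => wT_nonneg E a') (Finset.mem_univ a)

theorem wYr_le_SWY {g : B ⊕ Bool → ℝ} (a : A) : wYr E a g ≤ SWY E g :=
  Finset.single_le_sum (f := fun a' => wYr E a' g) (fun a' _ => wYr_nonneg E a')
    (Finset.mem_univ a)

theorem yP_le_sYP {g : B ⊕ Bool → ℝ} (b : B) : yP g b ≤ sYP g :=
  Finset.single_le_sum (f := fun b' => yP g b') (fun b' _ => yP_nonneg b') (Finset.mem_univ b)

theorem SYt_eq_one_of_sA0 {f : A ⊕ B → ℝ} (hn : ∀ v, 0 ≤ f v) (hs : sInA f + sInB f = 1)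
    (hA0 : sInA f = 0) : SYt f = 1 := by
  have hB1 : sInB f = 1 := by linarith
  have hss : sS f = 0 := by rw [sS, hA0, hB1]; norm_num
  exact SYt_eq_one hn hss (by rw [hB1]; norm_num)

theorem sS_eq_one_of_sB0 {f : A ⊕ B → ℝ} (hs : sInA f + sInB f = 1)
    (hB0 : sInB f = 0) : sS f = 1 := by
  have hA1 : sInA f = 1 := by linarith
  rw [sS, hA1, hB0]
  norm_num

theorem coeH_nonneg {g : B ⊕ Bool → ℝ} (hn : ∀ v, 0 ≤ g v)
    (hs : sY g + (tM g + tP g) = 1) : 0 ≤ coeH g := by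
  have hc0 := ccY_nonneg hn
  have hc1 := ccY_le_one hn hs
  have htM0 : 0 ≤ tM g := hn (Sum.inr true)
  have htP0 : 0 ≤ tP g := hn (Sum.inr false)
  have hsY0 := sY_nonneg hn
  have htM1 : tM g ≤ 1 := by linarith
  rw [coeH]
  rcases le_total (2 * ccY g) 1 with h | h
  · rw [max_eq_right (by linarith), max_eq_left (by linarith)]
    nlinarith
  · rw [max_eq_left (by linarith), max_eq_right (by linarith)]
    linarith

theorem coeH_zero_of_sYP0 {g : B ⊕ Bool → ℝ} (hn : ∀ v, 0 ≤ g v)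
    (hs : sY g + (tM g + tP g) = 1) (hp : tP g = 0 ∨ tM g = 0)
    (h : sYP g = 0) : coeH g = 0 := by
  rcases hp with h1 | h1
  · obtain ⟨h4, h5⟩ := tP_zero_imp hn h1
    have h6 : sY g = 0 := by rw [← h4, h]
    have h7 : tM g = 1 := by linarith
    rw [coeH, h5, h7]
    norm_num
  · have h6 : ccY g = 1 := by
      rw [ccY, h]
      linarith
    rw [coeH, h1, h6]
    norm_num

theorem ccY_zero_of_SWY0 {g : B ⊕ Bool → ℝ} (hn : ∀ v, 0 ≤ g v)
    (hw : ∃ a, ∀ b, g (Sum.inl b) ≠ 0 → ¬ E a b) (h : SWY E g = 0) : ccY g = 0 :=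
  (SWY_zero_imp E hn hw h).2

/-! #### Continuity of the maps -/

section Conts

variable [Nonempty A] [Nonempty B]

theorem contX_coord (v : A ⊕ B) :
    Continuous fun p : (bipIndep E).realization => (p : A ⊕ B → ℝ) v :=
  (continuous_apply v).comp continuous_subtype_val

theorem contX_sInA : Continuous fun p : (bipIndep E).realization => sInA (p : A ⊕ B → ℝ) := by
  unfold sInA
  exact continuous_finset_sum _ fun a _ => contX_coord E (Sum.inl a)

theorem contX_sInB : Continuous fun p : (bipIndep E).realization => sInB (p : A ⊕ B → ℝ) := by
  unfold sInB
  exact continuous_finset_sum _ fun b _ => contX_coord E (Sum.inr b)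

theorem contX_sS : Continuous fun p : (bipIndep E).realization => sS (p : A ⊕ B → ℝ) := by
  unfold sS
  exact ((contX_sInA E).sub (contX_sInB E)).max continuous_const

theorem contX_dMass (a : A) :
    Continuous fun p : (bipIndep E).realization => dMass E a (p : A ⊕ B → ℝ) := by
  unfold dMass
  refine continuous_finset_sum _ fun b _ => ?_
  by_cases h : E a b
  · simpa [h] using contX_coord E (Sum.inr b)
  · simpa [h] using continuous_const (y := (0:ℝ))

theorem oneSubsS_zero (p : (bipIndep E).realization)
    (h : sInB (p : A ⊕ B → ℝ) = 0) : 1 - sS (p : A ⊕ B → ℝ) = 0 := by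
  rw [sS_eq_one_of_sB0 (memX_sum E p.2) h]
  ring

theorem oneSubsS_nonneg (p : (bipIndep E).realization) :
    0 ≤ 1 - sS (p : A ⊕ B → ℝ) := by
  have := sS_le_one (memX_nonneg E p.2) (memX_sum E p.2)
  linarith

theorem contX_Yt (b : B) :
    Continuous fun p : (bipIndep E).realization => Yt (p : A ⊕ B → ℝ) b := by
  unfold Yt
  refine Continuous.max ?_ continuous_const
  refine Continuous.sub ?_ (contX_sS E)
  exact cont_mul_div (continuous_const.sub (contX_sS E)) (contX_coord E (Sum.inr b))
    (contX_sInB E) (fun p => memX_nonneg E p.2 _)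
    (fun p => coordB_le_sInB (memX_nonneg E p.2) b)
    (oneSubsS_nonneg E) (oneSubsS_zero E)

theorem contX_SYt : Continuous fun p : (bipIndep E).realization => SYt (p : A ⊕ B → ℝ) := by
  unfold SYt
  exact continuous_finset_sum _ fun b _ => contX_Yt E b

theorem contX_wT (a : A) :
    Continuous fun p : (bipIndep E).realization => wT E a (p : A ⊕ B → ℝ) := by
  unfold wT
  refine Continuous.max ?_ continuous_const
  refine Continuous.sub (contX_sS E) ?_
  exact cont_mul_div (continuous_const.sub (contX_sS E)) (contX_dMass E a)
    (contX_sInB E) (fun p => dMass_nonneg E (memX_nonneg E p.2) a)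
    (fun p => dMass_le_sInB E (memX_nonneg E p.2) a)
    (oneSubsS_nonneg E) (oneSubsS_zero E)

theorem contX_SW : Continuous fun p : (bipIndep E).realization => SW E (p : A ⊕ B → ℝ) := by
  unfold SW
  exact continuous_finset_sum _ fun a _ => contX_wT E a

theorem oneSubSYt_nonneg (p : (bipIndep E).realization) :
    0 ≤ 1 - SYt (p : A ⊕ B → ℝ) := by
  have := SYt_le_one (memX_nonneg E p.2) (memX_sum E p.2)
  linarith

/-- The continuous map `q₂ : |X| → |X|`. -/
noncomputable def cq2 : C((bipIndep E).realization, (bipIndep E).realization) :=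
  ⟨fun p => ⟨q2raw (p : A ⊕ B → ℝ), q2_mem E p.2⟩, by
    refine Continuous.subtype_mk ?_ _
    refine continuous_pi fun v => ?_
    rcases v with a | b
    · show Continuous fun p : (bipIndep E).realization =>
        (1 - SYt (p : A ⊕ B → ℝ)) * ((p : A ⊕ B → ℝ) (Sum.inl a) / sInA (p : A ⊕ B → ℝ))
      exact cont_mul_div (continuous_const.sub (contX_SYt E)) (contX_coord E (Sum.inl a))
        (contX_sInA E) (fun p => memX_nonneg E p.2 _)
        (fun p => coordA_le_sInA (memX_nonneg E p.2) a)
        (oneSubSYt_nonneg E)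
        (fun p h => by
          rw [SYt_eq_one_of_sA0 (memX_nonneg E p.2) (memX_sum E p.2) h]
          ring)
    · show Continuous fun p : (bipIndep E).realization => Yt (p : A ⊕ B → ℝ) b
      exact contX_Yt E b⟩

/-- The continuous map `q₃ : |X| → |X|`. -/
noncomputable def cq3 : C((bipIndep E).realization, (bipIndep E).realization) :=
  ⟨fun p => ⟨q3raw E (p : A ⊕ B → ℝ), q3_mem E p.2⟩, by
    refine Continuous.subtype_mk ?_ _
    refine continuous_pi fun v => ?_
    rcases v with a | b
    · show Continuous fun p : (bipIndep E).realization =>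
        (1 - SYt (p : A ⊕ B → ℝ)) * (wT E a (p : A ⊕ B → ℝ) / SW E (p : A ⊕ B → ℝ))
      exact cont_mul_div (continuous_const.sub (contX_SYt E)) (contX_wT E a)
        (contX_SW E) (fun p => wT_nonneg E a)
        (fun p => wT_le_SW E a)
        (oneSubSYt_nonneg E)
        (fun p h => by
          rw [SW_zero_imp E (memX_nonneg E p.2) (memX_sum E p.2) (memX_indep E p.2) h]
          ring)
    · show Continuous fun p : (bipIndep E).realization => Yt (p : A ⊕ B → ℝ) b
      exact contX_Yt E b⟩

/-- The continuous map `φ : |X| → |ΣY|`. -/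
noncomputable def cphi : C((bipIndep E).realization,
    (SComplex.suspension (nbrComplex E)).realization) :=
  ⟨fun p => ⟨phiRaw (p : A ⊕ B → ℝ), phi_mem E p.2⟩, by
    refine Continuous.subtype_mk ?_ _
    refine continuous_pi fun v => ?_
    rcases v with b | s
    · show Continuous fun p : (bipIndep E).realization =>
        min (2 * sInA (p : A ⊕ B → ℝ)) (2 * sInB (p : A ⊕ B → ℝ)) *
          ((p : A ⊕ B → ℝ) (Sum.inr b) / sInB (p : A ⊕ B → ℝ))
      refine cont_mul_div ((continuous_const.mul (contX_sInA E)).min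
        (continuous_const.mul (contX_sInB E))) (contX_coord E (Sum.inr b))
        (contX_sInB E) (fun p => memX_nonneg E p.2 _)
        (fun p => coordB_le_sInB (memX_nonneg E p.2) b)
        (fun p => le_min (by have := sInA_nonneg (memX_nonneg E p.2); linarith)
          (by have := sInB_nonneg (memX_nonneg E p.2); linarith))
        (fun p h => by
          rw [h, mul_zero]
          exact min_eq_right (by have := sInA_nonneg (memX_nonneg E p.2); linarith))
    · cases s
      · show Continuous fun p : (bipIndep E).realization =>
          max (sInA (p : A ⊕ B → ℝ) - sInB (p : A ⊕ B → ℝ)) 0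
        exact ((contX_sInA E).sub (contX_sInB E)).max continuous_const
      · show Continuous fun p : (bipIndep E).realization =>
          max (sInB (p : A ⊕ B → ℝ) - sInA (p : A ⊕ B → ℝ)) 0
        exact ((contX_sInB E).sub (contX_sInA E)).max continuous_const⟩

theorem contS_coord (v : B ⊕ Bool) :
    Continuous fun p : (SComplex.suspension (nbrComplex E)).realization =>
      (p : B ⊕ Bool → ℝ) v :=
  (continuous_apply v).comp continuous_subtype_val

theorem contS_tP : Continuous fun p : (SComplex.suspension (nbrComplex E)).realization =>
    tP (p : B ⊕ Bool → ℝ) := contS_coord E (Sum.inr false)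

theorem contS_tM : Continuous fun p : (SComplex.suspension (nbrComplex E)).realization =>
    tM (p : B ⊕ Bool → ℝ) := contS_coord E (Sum.inr true)

theorem contS_sY : Continuous fun p : (SComplex.suspension (nbrComplex E)).realization =>
    sY (p : B ⊕ Bool → ℝ) := by
  unfold sY
  exact continuous_finset_sum _ fun b _ => contS_coord E (Sum.inl b)

theorem contS_yP (b : B) :
    Continuous fun p : (SComplex.suspension (nbrComplex E)).realization =>
      yP (p : B ⊕ Bool → ℝ) b := by
  unfold yP
  exact ((contS_coord E (Sum.inl b)).sub (contS_tP E)).max continuous_const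

theorem contS_sYP : Continuous fun p : (SComplex.suspension (nbrComplex E)).realization =>
    sYP (p : B ⊕ Bool → ℝ) := by
  unfold sYP
  exact continuous_finset_sum _ fun b _ => contS_yP E b

theorem contS_dMassY (a : A) :
    Continuous fun p : (SComplex.suspension (nbrComplex E)).realization =>
      dMassY E a (p : B ⊕ Bool → ℝ) := by
  unfold dMassY
  refine continuous_finset_sum _ fun b _ => ?_
  by_cases h : E a b
  · simpa [h] using contS_coord E (Sum.inl b)
  · simpa [h] using continuous_const (y := (0:ℝ))

theorem contS_wYr (a : A) :
    Continuous fun p : (SComplex.suspension (nbrComplex E)).realization =>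
      wYr E a (p : B ⊕ Bool → ℝ) := by
  unfold wYr
  exact ((contS_tP E).sub (contS_dMassY E a)).max continuous_const

theorem contS_SWY : Continuous fun p : (SComplex.suspension (nbrComplex E)).realization =>
    SWY E (p : B ⊕ Bool → ℝ) := by
  unfold SWY
  exact continuous_finset_sum _ fun a _ => contS_wYr E a

theorem contS_ccY : Continuous fun p : (SComplex.suspension (nbrComplex E)).realization =>
    ccY (p : B ⊕ Bool → ℝ) := by
  unfold ccY
  exact ((contS_tP E).add (contS_sY E)).sub (contS_sYP E)

theorem contS_coeH : Continuous fun p : (SComplex.suspension (nbrComplex E)).realization =>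
    coeH (p : B ⊕ Bool → ℝ) := by
  unfold coeH
  refine Continuous.sub (Continuous.sub continuous_const ?_) ?_
  · exact ((continuous_const.mul (contS_ccY E)).sub continuous_const).max continuous_const
  · exact (contS_tM E).mul
      ((continuous_const.sub (continuous_const.mul (contS_ccY E))).max continuous_const)

/-- The continuous map `ψ : |ΣY| → |X|`. -/
noncomputable def cpsi : C((SComplex.suspension (nbrComplex E)).realization,
    (bipIndep E).realization) :=
  ⟨fun p => ⟨psiRaw E (p : B ⊕ Bool → ℝ), psi_mem E p.2⟩, by
    refine Continuous.subtype_mk ?_ _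
    refine continuous_pi fun v => ?_
    rcases v with a | b
    · show Continuous fun p : (SComplex.suspension (nbrComplex E)).realization =>
        ccY (p : B ⊕ Bool → ℝ) * (wYr E a (p : B ⊕ Bool → ℝ) / SWY E (p : B ⊕ Bool → ℝ))
      exact cont_mul_div (contS_ccY E) (contS_wYr E a) (contS_SWY E)
        (fun p => wYr_nonneg E a) (fun p => wYr_le_SWY E a)
        (fun p => ccY_nonneg (memS_nonneg E p.2))
        (fun p h => ccY_zero_of_SWY0 E (memS_nonneg E p.2) (memS_witness E p.2) h)
    · show Continuous fun p : (SComplex.suspension (nbrComplex E)).realization =>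
        yP (p : B ⊕ Bool → ℝ) b + tM (p : B ⊕ Bool → ℝ) / (Fintype.card B : ℝ)
      exact (contS_yP E b).add ((contS_tM E).div_const _)⟩

/-- The continuous intermediate map `h₁ : |ΣY| → |ΣY|`. -/
noncomputable def ch1 : C((SComplex.suspension (nbrComplex E)).realization,
    (SComplex.suspension (nbrComplex E)).realization) :=
  ⟨fun p => ⟨h1raw (p : B ⊕ Bool → ℝ), h1_mem E p.2⟩, by
    refine Continuous.subtype_mk ?_ _
    refine continuous_pi fun v => ?_
    rcases v with b | s
    · show Continuous fun p : (SComplex.suspension (nbrComplex E)).realization =>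
        coeH (p : B ⊕ Bool → ℝ) * (yP (p : B ⊕ Bool → ℝ) b / sYP (p : B ⊕ Bool → ℝ))
      exact cont_mul_div (contS_coeH E) (contS_yP E b) (contS_sYP E)
        (fun p => yP_nonneg b) (fun p => yP_le_sYP b)
        (fun p => coeH_nonneg (memS_nonneg E p.2) (memS_sum E p.2))
        (fun p h => coeH_zero_of_sYP0 (memS_nonneg E p.2) (memS_sum E p.2)
          (memS_poles E p.2) h)
    · cases s
      · show Continuous fun p : (SComplex.suspension (nbrComplex E)).realization =>
          max (2 * ccY (p : B ⊕ Bool → ℝ) - 1) 0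
        exact ((continuous_const.mul (contS_ccY E)).sub continuous_const).max continuous_const
      · show Continuous fun p : (SComplex.suspension (nbrComplex E)).realization =>
          tM (p : B ⊕ Bool → ℝ) * max (1 - 2 * ccY (p : B ⊕ Bool → ℝ)) 0
        exact (contS_tM E).mul
          ((continuous_const.sub (continuous_const.mul (contS_ccY E))).max continuous_const)⟩

end Conts


/-! #### Support computations for the homotopies -/

theorem ne_of_mul_div_ne {c u v : ℝ} (h : c * (u / v) ≠ 0) : u ≠ 0 := by
  intro h0
  rw [h0, zero_div, mul_zero] at h
  exact h rfl

theorem phi_tP {f : A ⊕ B → ℝ} : tP (phiRaw f) = sS f := by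
  simp [tP, phiRaw, sS]

theorem phi_tM {f : A ⊕ B → ℝ} : tM (phiRaw f) = max (sInB f - sInA f) 0 := by
  simp [tM, phiRaw]

section HtpySection

variable [Nonempty A] [Nonempty B]

theorem psi_sInA {g : B ⊕ Bool → ℝ} (hn : ∀ v, 0 ≤ g v)
    (hw : ∃ a, ∀ b, g (Sum.inl b) ≠ 0 → ¬ E a b) :
    sInA (psiRaw E g) = ccY g := by
  unfold sInA
  simp only [psiRaw, Sum.elim_inl]
  rw [← Finset.mul_sum, ← Finset.sum_div]
  have h2 : (∑ a, wYr E a g) = SWY E g := rfl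
  rw [h2]
  by_cases h : SWY E g = 0
  · rw [h, div_zero, mul_zero, ccY_zero_of_SWY0 E hn hw h]
  · rw [div_self h, mul_one]

theorem psi_sInB {g : B ⊕ Bool → ℝ} : sInB (psiRaw E g) = sYP g + tM g := by
  unfold sInB
  simp only [psiRaw, Sum.elim_inr]
  rw [Finset.sum_add_distrib, Finset.sum_const, Finset.card_univ, nsmul_eq_mul]
  have h4 : (Fintype.card B : ℝ) * (tM g / (Fintype.card B : ℝ)) = tM g := by
    have : (Fintype.card B : ℝ) ≠ 0 := by
      exact_mod_cast Fintype.card_ne_zero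
    field_simp
  rw [h4]
  rfl

/-! #### The homotopies -/

/-- Homotopy `id ≃ q₂` on `|X|`. -/
noncomputable def htpyX1 :
    (ContinuousMap.id ((bipIndep E).realization)).Homotopy (cq2 E) := by
  refine lineHomotopy (bipIndep E) _ _ fun p => ?_
  have hn := memX_nonneg E p.2
  obtain ⟨F, hF, hsub⟩ := p.2.2.2
  refine ⟨F, hF, fun v hv => ?_⟩
  rcases hv with hv | hv
  · exact hsub v hv
  · rcases v with a | b
    · refine hsub _ ?_
      have hv' : (1 - SYt (p : A ⊕ B → ℝ)) *
          ((p : A ⊕ B → ℝ) (Sum.inl a) / sInA (p : A ⊕ B → ℝ)) ≠ 0 := hv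
      exact ne_of_mul_div_ne hv'
    · refine hsub _ ?_
      have hv' : Yt (p : A ⊕ B → ℝ) b ≠ 0 := hv
      exact (Yt_ne_imp hn hv').1

/-- Homotopy `q₂ ≃ q₃` on `|X|`. -/
noncomputable def htpyX2 : (cq2 E).Homotopy (cq3 E) := by
  refine lineHomotopy (bipIndep E) _ _ fun p => ?_
  have hn := memX_nonneg E p.2
  have hs := memX_sum E p.2
  have hind := memX_indep E p.2
  refine ⟨Finset.univ.filter (fun v => ((cq2 E) p).1 v ≠ 0 ∨ ((cq3 E) p).1 v ≠ 0),
    mem_bipIndep_faces E ?_, fun v hv => Finset.mem_filter.mpr ⟨Finset.mem_univ v, hv⟩⟩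
  intro a b ha hb
  have ha' := (Finset.mem_filter.mp ha).2
  have hb' := (Finset.mem_filter.mp hb).2
  have hYb : Yt (p : A ⊕ B → ℝ) b ≠ 0 := by
    rcases hb' with h | h
    · exact h
    · exact h
  rcases ha' with h | h
  · have hfa : (p : A ⊕ B → ℝ) (Sum.inl a) ≠ 0 := by
      have h' : (1 - SYt (p : A ⊕ B → ℝ)) *
          ((p : A ⊕ B → ℝ) (Sum.inl a) / sInA (p : A ⊕ B → ℝ)) ≠ 0 := h
      exact ne_of_mul_div_ne h'
    exact hind a b hfa (Yt_ne_imp hn hYb).1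
  · have hw : wT E a (p : A ⊕ B → ℝ) ≠ 0 := by
      have h' : (1 - SYt (p : A ⊕ B → ℝ)) *
          (wT E a (p : A ⊕ B → ℝ) / SW E (p : A ⊕ B → ℝ)) ≠ 0 := h
      exact ne_of_mul_div_ne h'
    exact cross_indep E hn hs hw hYb

/-- Homotopy `q₃ ≃ ψ ∘ φ` on `|X|`. -/
noncomputable def htpyX3 : (cq3 E).Homotopy ((cpsi E).comp (cphi E)) := by
  refine lineHomotopy (bipIndep E) _ _ fun p => ?_
  have hn := memX_nonneg E p.2
  have hs := memX_sum E p.2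
  have hind := memX_indep E p.2
  have hgmem := phi_mem E p.2
  have hng : ∀ v, 0 ≤ phiRaw (p : A ⊕ B → ℝ) v := hgmem.1
  refine ⟨Finset.univ.filter
      (fun v => ((cq3 E) p).1 v ≠ 0 ∨ (((cpsi E).comp (cphi E)) p).1 v ≠ 0),
    mem_bipIndep_faces E ?_, fun v hv => Finset.mem_filter.mpr ⟨Finset.mem_univ v, hv⟩⟩
  intro a b ha hb
  intro hE
  have ha' := (Finset.mem_filter.mp ha).2
  have hb' := (Finset.mem_filter.mp hb).2
  have hA0 := sInA_nonneg hn
  have hB0 := sInB_nonneg hn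
  have hs1 := sS_le_one hn hs
  have hs0 : 0 ≤ sS (p : A ⊕ B → ℝ) := sS_nonneg
  rcases le_total (sInA (p : A ⊕ B → ℝ)) (sInB (p : A ⊕ B → ℝ)) with hAB | hBA
  · -- `α ≤ β`: no `A`-coordinates can be nonzero
    have hsS0 : sS (p : A ⊕ B → ℝ) = 0 := max_eq_right (by linarith)
    have htPg : tP (phiRaw (p : A ⊕ B → ℝ)) = 0 := by rw [phi_tP, hsS0]
    rcases ha' with ha1 | ha1
    · have hw : wT E a (p : A ⊕ B → ℝ) ≠ 0 := by
        have h' : (1 - SYt (p : A ⊕ B → ℝ)) *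
            (wT E a (p : A ⊕ B → ℝ) / SW E (p : A ⊕ B → ℝ)) ≠ 0 := ha1
        exact ne_of_mul_div_ne h'
      have h1 := wT_ne_imp E hw
      have h2 : 0 ≤ (1 - sS (p : A ⊕ B → ℝ)) *
          (dMass E a (p : A ⊕ B → ℝ) / sInB (p : A ⊕ B → ℝ)) :=
        mul_nonneg (by linarith) (div_nonneg (dMass_nonneg E hn a) hB0)
      rw [hsS0] at h1 h2
      linarith
    · have hw : wYr E a (phiRaw (p : A ⊕ B → ℝ)) ≠ 0 := by
        have h' : ccY (phiRaw (p : A ⊕ B → ℝ)) *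
            (wYr E a (phiRaw (p : A ⊕ B → ℝ)) / SWY E (phiRaw (p : A ⊕ B → ℝ))) ≠ 0 := ha1
        exact ne_of_mul_div_ne h'
      have h1 := wYr_ne_imp E hw
      have h2 := dMassY_nonneg E hng a
      rw [htPg] at h1
      linarith
  · -- `β ≤ α`
    have hsS : sS (p : A ⊕ B → ℝ) = sInA (p : A ⊕ B → ℝ) - sInB (p : A ⊕ B → ℝ) :=
      max_eq_left (by linarith)
    have htPg : tP (phiRaw (p : A ⊕ B → ℝ)) = sS (p : A ⊕ B → ℝ) := phi_tP
    have hmin : min (2 * sInA (p : A ⊕ B → ℝ)) (2 * sInB (p : A ⊕ B → ℝ)) =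
        1 - sS (p : A ⊕ B → ℝ) := by
      rw [min_eq_right (by linarith), hsS]
      linarith
    -- from `hb'`, get the truncated inequality
    have htrunc : sS (p : A ⊕ B → ℝ) < (1 - sS (p : A ⊕ B → ℝ)) *
        ((p : A ⊕ B → ℝ) (Sum.inr b) / sInB (p : A ⊕ B → ℝ)) := by
      rcases hb' with hb1 | hb1
      · have hb2 : Yt (p : A ⊕ B → ℝ) b ≠ 0 := hb1
        exact (Yt_ne_imp hn hb2).2
      · have htMg : tM (phiRaw (p : A ⊕ B → ℝ)) = 0 := by
          rw [phi_tM]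
          exact max_eq_right (by linarith)
        have hb2 : yP (phiRaw (p : A ⊕ B → ℝ)) b +
            tM (phiRaw (p : A ⊕ B → ℝ)) / (Fintype.card B : ℝ) ≠ 0 := hb1
        rw [htMg, zero_div, add_zero] at hb2
        have h2 := yP_ne_imp hng hb2
        have hgb : phiRaw (p : A ⊕ B → ℝ) (Sum.inl b) =
            min (2 * sInA (p : A ⊕ B → ℝ)) (2 * sInB (p : A ⊕ B → ℝ)) *
              ((p : A ⊕ B → ℝ) (Sum.inr b) / sInB (p : A ⊕ B → ℝ)) := rfl
        have h3 := h2.2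
        rw [hgb, hmin, htPg] at h3
        exact h3
    have hfb : (p : A ⊕ B → ℝ) (Sum.inr b) ≠ 0 := by
      intro h0
      rw [h0, zero_div, mul_zero] at htrunc
      linarith
    rcases ha' with ha1 | ha1
    · have hw : wT E a (p : A ⊕ B → ℝ) ≠ 0 := by
        have h' : (1 - SYt (p : A ⊕ B → ℝ)) *
            (wT E a (p : A ⊕ B → ℝ) / SW E (p : A ⊕ B → ℝ)) ≠ 0 := ha1
        exact ne_of_mul_div_ne h'
      have hYb : Yt (p : A ⊕ B → ℝ) b ≠ 0 := by
        have hpos : 0 < (1 - sS (p : A ⊕ B → ℝ)) *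
            ((p : A ⊕ B → ℝ) (Sum.inr b) / sInB (p : A ⊕ B → ℝ)) - sS (p : A ⊕ B → ℝ) := by
          linarith
        rw [Yt, max_eq_left hpos.le]
        exact hpos.ne'
      exact cross_indep E hn hs hw hYb hE
    · have hw : wYr E a (phiRaw (p : A ⊕ B → ℝ)) ≠ 0 := by
        have h' : ccY (phiRaw (p : A ⊕ B → ℝ)) *
            (wYr E a (phiRaw (p : A ⊕ B → ℝ)) / SWY E (phiRaw (p : A ⊕ B → ℝ))) ≠ 0 := ha1
        exact ne_of_mul_div_ne h'
      have h1 := wYr_ne_imp E hw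
      have h4 : phiRaw (p : A ⊕ B → ℝ) (Sum.inl b) ≤
          dMassY E a (phiRaw (p : A ⊕ B → ℝ)) := coordY_le_dMassY E hng hE
      have h5 : phiRaw (p : A ⊕ B → ℝ) (Sum.inl b) = (1 - sS (p : A ⊕ B → ℝ)) *
          ((p : A ⊕ B → ℝ) (Sum.inr b) / sInB (p : A ⊕ B → ℝ)) := by
        have hgb : phiRaw (p : A ⊕ B → ℝ) (Sum.inl b) =
            min (2 * sInA (p : A ⊕ B → ℝ)) (2 * sInB (p : A ⊕ B → ℝ)) *
              ((p : A ⊕ B → ℝ) (Sum.inr b) / sInB (p : A ⊕ B → ℝ)) := rfl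
        rw [hgb, hmin]
      rw [htPg] at h1
      linarith

/-- Homotopy `id ≃ h₁` on `|ΣY|`. -/
noncomputable def htpyS1 :
    (ContinuousMap.id ((SComplex.suspension (nbrComplex E)).realization)).Homotopy (ch1 E) := by
  refine lineHomotopy (SComplex.suspension (nbrComplex E)) _ _ fun p => ?_
  have hn := memS_nonneg E p.2
  have hp := memS_poles E p.2
  obtain ⟨a0, ha0⟩ := memS_witness E p.2
  refine ⟨Finset.univ.filter
      (fun v => (p : B ⊕ Bool → ℝ) v ≠ 0 ∨ ((ch1 E) p).1 v ≠ 0),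
    mem_susp_faces E ?_ ?_, fun v hv => Finset.mem_filter.mpr ⟨Finset.mem_univ v, hv⟩⟩
  · refine ⟨a0, fun b hb => ?_⟩
    have hb' := (Finset.mem_filter.mp (Finset.mem_preimage.mp hb)).2
    refine ha0 b ?_
    rcases hb' with h | h
    · exact h
    · have h' : coeH (p : B ⊕ Bool → ℝ) *
          (yP (p : B ⊕ Bool → ℝ) b / sYP (p : B ⊕ Bool → ℝ)) ≠ 0 := h
      exact (yP_ne_imp hn (ne_of_mul_div_ne h')).1
  · rw [Finset.card_le_one]
    intro u hu v hv
    have hu' := (Finset.mem_filter.mp (Finset.mem_preimage.mp hu)).2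
    have hv' := (Finset.mem_filter.mp (Finset.mem_preimage.mp hv)).2
    have key : ∀ w : Bool, ((p : B ⊕ Bool → ℝ) (Sum.inr w) ≠ 0 ∨
        ((ch1 E) p).1 (Sum.inr w) ≠ 0) → w = false → False → True := fun _ _ _ _ => trivial
    -- exclusivity: if the `true` side is active then `tM ≠ 0`, forcing the
    -- `false` side to vanish.
    have hexcl : ¬ (((p : B ⊕ Bool → ℝ) (Sum.inr false) ≠ 0 ∨
        ((ch1 E) p).1 (Sum.inr false) ≠ 0) ∧ ((p : B ⊕ Bool → ℝ) (Sum.inr true) ≠ 0 ∨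
        ((ch1 E) p).1 (Sum.inr true) ≠ 0)) := by
      rintro ⟨hfa, hta⟩
      have htM : tM (p : B ⊕ Bool → ℝ) ≠ 0 := by
        rcases hta with h | h
        · exact h
        · have h' : tM (p : B ⊕ Bool → ℝ) *
              max (1 - 2 * ccY (p : B ⊕ Bool → ℝ)) 0 ≠ 0 := h
          exact (mul_ne_zero_iff.mp h').1
      have htP : tP (p : B ⊕ Bool → ℝ) = 0 := by
        rcases hp with h | h
        · exact h
        · exact absurd h htM
      have hcc := (tP_zero_imp hn htP).2
      rcases hfa with h | h
      · exact h htP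
      · have h' : max (2 * ccY (p : B ⊕ Bool → ℝ) - 1) 0 ≠ 0 := h
        have := pos_of_max_ne_zero h'
        rw [hcc] at this
        linarith
    cases u <;> cases v
    · rfl
    · exact absurd ⟨hu', hv'⟩ hexcl
    · exact absurd ⟨hv', hu'⟩ hexcl
    · rfl

/-- Homotopy `h₁ ≃ φ ∘ ψ` on `|ΣY|`. -/
noncomputable def htpyS2 : (ch1 E).Homotopy ((cphi E).comp (cpsi E)) := by
  refine lineHomotopy (SComplex.suspension (nbrComplex E)) _ _ fun p => ?_
  have hn := memS_nonneg E p.2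
  have hs := memS_sum E p.2
  have hp := memS_poles E p.2
  have hwit := memS_witness E p.2
  have hmemh := psi_mem E p.2
  have hnh : ∀ v, 0 ≤ psiRaw E (p : B ⊕ Bool → ℝ) v := hmemh.1
  have hA := psi_sInA E hn hwit
  have hB := psi_sInB E (g := (p : B ⊕ Bool → ℝ))
  obtain ⟨a0, ha0⟩ := hwit
  refine ⟨Finset.univ.filter
      (fun v => ((ch1 E) p).1 v ≠ 0 ∨ (((cphi E).comp (cpsi E)) p).1 v ≠ 0),
    mem_susp_faces E ?_ ?_, fun v hv => Finset.mem_filter.mpr ⟨Finset.mem_univ v, hv⟩⟩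
  · refine ⟨a0, fun b hb => ?_⟩
    have hb' := (Finset.mem_filter.mp (Finset.mem_preimage.mp hb)).2
    refine ha0 b ?_
    rcases hb' with h | h
    · have h' : coeH (p : B ⊕ Bool → ℝ) *
          (yP (p : B ⊕ Bool → ℝ) b / sYP (p : B ⊕ Bool → ℝ)) ≠ 0 := h
      exact (yP_ne_imp hn (ne_of_mul_div_ne h')).1
    · -- coordinate of `φ ∘ ψ`
      have h' : min (2 * sInA (psiRaw E (p : B ⊕ Bool → ℝ)))
            (2 * sInB (psiRaw E (p : B ⊕ Bool → ℝ))) *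
          (psiRaw E (p : B ⊕ Bool → ℝ) (Sum.inr b) /
            sInB (psiRaw E (p : B ⊕ Bool → ℝ))) ≠ 0 := h
      have hcb : psiRaw E (p : B ⊕ Bool → ℝ) (Sum.inr b) ≠ 0 := ne_of_mul_div_ne h'
      have hcb' : yP (p : B ⊕ Bool → ℝ) b +
          tM (p : B ⊕ Bool → ℝ) / (Fintype.card B : ℝ) ≠ 0 := hcb
      by_cases hyP : yP (p : B ⊕ Bool → ℝ) b = 0
      · exfalso
        -- then `tM ≠ 0`, so `tP = 0`, `ccY = 0`, so the `min` factor vanishes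
        have htM : tM (p : B ⊕ Bool → ℝ) ≠ 0 := by
          intro h0
          rw [hyP, h0, zero_div, add_zero] at hcb'
          exact hcb' rfl
        have htP : tP (p : B ⊕ Bool → ℝ) = 0 := by
          rcases hp with h0 | h0
          · exact h0
          · exact absurd h0 htM
        have hcc := (tP_zero_imp hn htP).2
        rw [hA, hcc, mul_zero] at h'
        have hBnn : 0 ≤ sInB (psiRaw E (p : B ⊕ Bool → ℝ)) := sInB_nonneg hnh
        rw [min_eq_left (by linarith), zero_mul] at h'
        exact h' rfl
      · exact (yP_ne_imp hn hyP).1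
  · rw [Finset.card_le_one]
    intro u hu v hv
    have hu' := (Finset.mem_filter.mp (Finset.mem_preimage.mp hu)).2
    have hv' := (Finset.mem_filter.mp (Finset.mem_preimage.mp hv)).2
    have hcsum : ccY (p : B ⊕ Bool → ℝ) +
        (sYP (p : B ⊕ Bool → ℝ) + tM (p : B ⊕ Bool → ℝ)) = 1 := by
      rw [ccY]
      linarith
    have hexcl : ¬ ((((ch1 E) p).1 (Sum.inr false) ≠ 0 ∨
        (((cphi E).comp (cpsi E)) p).1 (Sum.inr false) ≠ 0) ∧
        (((ch1 E) p).1 (Sum.inr true) ≠ 0 ∨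
        (((cphi E).comp (cpsi E)) p).1 (Sum.inr true) ≠ 0)) := by
      rintro ⟨hfa, hta⟩
      have hlt : 2 * ccY (p : B ⊕ Bool → ℝ) < 1 := by
        rcases hta with h | h
        · have h' : tM (p : B ⊕ Bool → ℝ) *
              max (1 - 2 * ccY (p : B ⊕ Bool → ℝ)) 0 ≠ 0 := h
          have := pos_of_max_ne_zero (mul_ne_zero_iff.mp h').2
          linarith
        · have h' : max (sInB (psiRaw E (p : B ⊕ Bool → ℝ)) -
              sInA (psiRaw E (p : B ⊕ Bool → ℝ))) 0 ≠ 0 := h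
          have := pos_of_max_ne_zero h'
          rw [hA, hB] at this
          linarith
      have hgt : 1 < 2 * ccY (p : B ⊕ Bool → ℝ) := by
        rcases hfa with h | h
        · have h' : max (2 * ccY (p : B ⊕ Bool → ℝ) - 1) 0 ≠ 0 := h
          have := pos_of_max_ne_zero h'
          linarith
        · have h' : max (sInA (psiRaw E (p : B ⊕ Bool → ℝ)) -
              sInB (psiRaw E (p : B ⊕ Bool → ℝ))) 0 ≠ 0 := h
          have := pos_of_max_ne_zero h'
          rw [hA, hB] at this
          linarith
      linarith
    cases u <;> cases v
    · rfl
    · exact absurd ⟨hu', hv'⟩ hexcl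
    · exact absurd ⟨hv', hu'⟩ hexcl
    · rfl

end HtpySection

end Statement2Aux

/-- Let `X` be the independence complex of a bipartite graph
with (nonempty) parts `A`, `B` and edge relation `E`, and let `Y` be the
complex on `B` of all subsets `F` such that some `a ∈ A` has no edge to any
element of `F`.  Then `X` is homotopy equivalent to the suspension of `Y`. -/
theorem statement_2 {A B : Type u} [Fintype A] [Fintype B] [Nonempty A]
    [Nonempty B] (E : A → B → Prop) :
    SComplex.HEquiv (bipIndep E) (SComplex.suspension (nbrComplex E)) := by
  refine ⟨⟨cphi E, cpsi E, ?_, ?_⟩⟩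
  · exact ContinuousMap.Homotopic.symm ⟨(htpyX1 E).trans ((htpyX2 E).trans (htpyX3 E))⟩
  · exact ContinuousMap.Homotopic.symm ⟨(htpyS1 E).trans (htpyS2 E)⟩

end
end
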